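/- arXiv:math/0001175 — 4 statements merged into one kernel-verified Lean document; each statement's English description precedes it below -/
import Mathlib

section
/- As a formal power series identity in u: ∏_{i ≥ 1} (1 - u^i/q^i)^{-M_i} = 1 + (q-1)u / (q(1-u)), where M_i = (1/i) ∑_{d|i} μ(d) (q^{i/d} - 1). -/
open PowerSeries

noncomputable section AuxIrr

variable (e : ℚ)

/-- the inverse of `1 - (C e * X)^i` -/
def geoAux (i : ℕ) : ℚ⟦X⟧ := PowerSeries.mk fun m => if i ∣ m then e ^ m else 0

lemma tpow (i : ℕ) : (PowerSeries.C (R := ℚ) e * X) ^ i = PowerSeries.C (R := ℚ) (e ^ i) * X ^ i := by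
  rw [mul_pow, map_pow]

lemma geoAux_mul (i : ℕ) (hi : 1 ≤ i) :
    (1 - (PowerSeries.C (R := ℚ) e * X) ^ i) * geoAux e i = 1 := by
  rw [tpow, sub_mul, one_mul, mul_assoc]
  ext m
  rw [map_sub, PowerSeries.coeff_C_mul, PowerSeries.coeff_X_pow_mul']
  rcases Nat.eq_zero_or_pos m with rfl | hm
  · simp [geoAux, Nat.one_le_iff_ne_zero.mp hi, Nat.not_succ_le_zero]
  · rw [PowerSeries.coeff_one, if_neg hm.ne']
    simp only [geoAux, PowerSeries.coeff_mk]
    by_cases hdvd : i ∣ m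
    · have him : i ≤ m := Nat.le_of_dvd hm hdvd
      have h2 : i ∣ m - i := (Nat.dvd_sub hdvd dvd_rfl)
      rw [if_pos hdvd, if_pos him, if_pos h2, ← pow_add, Nat.add_sub_cancel' him, sub_self]
    · rw [if_neg hdvd]
      split_ifs with h1 h2
      · exact absurd (by
          have : i ∣ (m - i) + i := Nat.dvd_add h2 dvd_rfl
          rwa [Nat.sub_add_cancel h1] at this) hdvd
      · simp
      · simp

end AuxIrr

section AuxIrr2
variable (e : ℚ)

lemma DpowAux (F : ℚ⟦X⟧) (N : ℕ) :
    d⁄dX ℚ (F ^ N) * F = (N : ℚ⟦X⟧) * F ^ N * d⁄dX ℚ F := by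
  induction N with
  | zero => simp
  | succ N ih =>
    rw [pow_succ, Derivation.leibniz, smul_eq_mul, smul_eq_mul]
    push_cast
    linear_combination F * ih

end AuxIrr2

section AuxIrr3

lemma prodDerivAux (F : ℕ → ℚ⟦X⟧) (N : ℕ → ℕ) (s : Finset ℕ) :
    d⁄dX ℚ (∏ i ∈ s, F i ^ N i) * ∏ i ∈ s, F i =
    (∏ i ∈ s, F i ^ N i) *
      ∑ i ∈ s, (N i : ℚ⟦X⟧) * d⁄dX ℚ (F i) * ∏ j ∈ s.erase i, F j := by
  induction s using Finset.induction_on with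
  | empty => simp
  | insert _ _ ha =>
    rename_i a s ih
    rw [Finset.prod_insert ha, Finset.prod_insert ha, Finset.sum_insert ha,
      Finset.erase_insert ha, Derivation.leibniz, smul_eq_mul, smul_eq_mul]
    have hsum : ∑ i ∈ s, (N i : ℚ⟦X⟧) * d⁄dX ℚ (F i) * ∏ j ∈ (insert a s).erase i, F j
        = F a * ∑ i ∈ s, (N i : ℚ⟦X⟧) * d⁄dX ℚ (F i) * ∏ j ∈ s.erase i, F j := by
      rw [Finset.mul_sum]
      refine Finset.sum_congr rfl fun i hi => ?_
      rw [Finset.erase_insert_of_ne (by rintro rfl; exact ha hi),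
        Finset.prod_insert (fun h => ha (Finset.mem_of_mem_erase h))]
      ring
    rw [hsum]
    have hp := DpowAux (F a) (N a)
    linear_combination (F a ^ N a * F a) * ih + ((∏ i ∈ s, F i ^ N i) * ∏ i ∈ s, F i) * hp

end AuxIrr3

noncomputable section AuxIrr4
variable (e : ℚ)

def Vser (i : ℕ) : ℚ⟦X⟧ := PowerSeries.mk fun k => if i ∣ (k+1) then (i : ℚ) * e ^ (k+1) else 0

lemma Vser_mul (i : ℕ) (hi : 1 ≤ i) :
    Vser e i * (1 - (PowerSeries.C (R := ℚ) e * X) ^ i) = d⁄dX ℚ ((PowerSeries.C (R := ℚ) e * X) ^ i) := by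
  rw [tpow, mul_sub, mul_one, mul_comm (Vser e i) _, mul_assoc]
  ext k
  rw [map_sub, PowerSeries.coeff_derivative, PowerSeries.coeff_C_mul,
    PowerSeries.coeff_C_mul, PowerSeries.coeff_X_pow_mul', PowerSeries.coeff_X_pow]
  simp only [Vser, PowerSeries.coeff_mk]
  have hdd : i ≤ k → (i ∣ (k - i + 1) ↔ i ∣ (k + 1)) := by
    intro hik
    constructor
    · intro hd
      have : i ∣ (k - i + 1) + i := Dvd.dvd.add hd dvd_rfl
      rwa [show k - i + 1 + i = k + 1 by omega] at this
    · intro hd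
      have : i ∣ (k + 1) - i := Nat.dvd_sub hd dvd_rfl
      rwa [show k + 1 - i = k - i + 1 by omega] at this
  by_cases hD : k + 1 = i
  · have hD' : ((k : ℚ) + 1) = (i : ℚ) := by exact_mod_cast congrArg (Nat.cast : ℕ → ℚ) hD
    rw [if_pos (hD ▸ dvd_rfl : i ∣ k + 1), if_pos hD, if_neg (by omega : ¬ i ≤ k), hD, hD']
    ring
  · rw [if_neg hD]
    by_cases hB : i ≤ k
    · rw [if_pos hB]
      by_cases hd : i ∣ k + 1
      · rw [if_pos hd, if_pos ((hdd hB).mpr hd)]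
        have hpow : e ^ i * e ^ (k - i + 1) = e ^ (k + 1) := by
          rw [← pow_add]; congr 1; omega
        linear_combination (-(i : ℚ)) * hpow
      · rw [if_neg hd, if_neg (fun h2 => hd ((hdd hB).mp h2))]
        ring
    · rw [if_neg hB, if_neg (fun hd => by have := Nat.le_of_dvd (Nat.succ_pos k) hd; omega)]
      ring

lemma deriv_geo (i : ℕ) (hi : 1 ≤ i) :
    d⁄dX ℚ ((PowerSeries.C (R := ℚ) e * X) ^ i) * geoAux e i = Vser e i := by
  rw [← Vser_mul e i hi, mul_assoc, geoAux_mul e i hi, mul_one]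

end AuxIrr4

section AuxIrr5
open Finset

lemma coreAux (q : ℕ) (hq : 2 ≤ q) (N : ℕ → ℕ) (n : ℕ)
    (hN : ∀ m : ℕ, 0 < m → m ≤ n → ∑ d ∈ m.divisors, (d : ℚ) * N d = (q : ℚ) ^ m) :
    ∀ k ≤ n, PowerSeries.coeff (R := ℚ) k
        (∏ i ∈ Icc 1 n, (1 - (PowerSeries.C (R := ℚ) (1 / q) * X) ^ i) ^ N i) =
      PowerSeries.coeff (R := ℚ) k (1 - X) := by
  have hq0 : (q : ℚ) ≠ 0 := by positivity
  set e : ℚ := 1 / q with he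
  set t : ℚ⟦X⟧ := PowerSeries.C (R := ℚ) e * X with ht
  set F : ℕ → ℚ⟦X⟧ := fun i => 1 - t ^ i with hF
  set A : ℚ⟦X⟧ := ∏ i ∈ Icc 1 n, F i ^ N i with hA
  set Pf : ℚ⟦X⟧ := ∏ i ∈ Icc 1 n, F i with hPf
  set Pg : ℚ⟦X⟧ := ∏ i ∈ Icc 1 n, geoAux e i with hPg
  set T : ℚ⟦X⟧ := ∑ i ∈ Icc 1 n, (N i : ℚ⟦X⟧) * Vser e i with hT
  set S : ℚ⟦X⟧ :=
    ∑ i ∈ Icc 1 n, (N i : ℚ⟦X⟧) * d⁄dX ℚ (F i) * ∏ j ∈ (Icc 1 n).erase i, F j with hS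
  have hmem : ∀ i ∈ Icc 1 n, 1 ≤ i := fun i hi => (mem_Icc.mp hi).1
  have hPQ : Pf * Pg = 1 := by
    rw [hPf, hPg, ← Finset.prod_mul_distrib]
    exact Finset.prod_eq_one fun i hi => geoAux_mul e i (hmem i hi)
  -- coefficients of T
  have hcoeffT : ∀ k, k < n → PowerSeries.coeff (R := ℚ) k T = 1 := by
    intro k hk
    rw [hT, map_sum]
    have hterm : ∀ i ∈ Icc 1 n, PowerSeries.coeff (R := ℚ) k ((N i : ℚ⟦X⟧) * Vser e i) =
        if i ∣ (k+1) then (N i : ℚ) * ((i : ℚ) * e ^ (k+1)) else 0 := by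
      intro i hi
      rw [← map_natCast (PowerSeries.C (R := ℚ)) (N i), PowerSeries.coeff_C_mul]
      simp only [Vser, PowerSeries.coeff_mk]
      split_ifs <;> simp
    rw [Finset.sum_congr rfl hterm, Finset.sum_ite, Finset.sum_const_zero, add_zero]
    have hfil : (Icc 1 n).filter (· ∣ (k+1)) = (k+1).divisors := by
      ext d
      simp only [mem_filter, mem_Icc, Nat.mem_divisors]
      constructor
      · rintro ⟨⟨h1, h2⟩, h3⟩; exact ⟨h3, Nat.succ_ne_zero k⟩
      · rintro ⟨h1, -⟩
        have hd1 : 1 ≤ d := Nat.pos_of_dvd_of_pos h1 (Nat.succ_pos k)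
        have hd2 : d ≤ k + 1 := Nat.le_of_dvd (Nat.succ_pos k) h1
        exact ⟨⟨hd1, le_trans hd2 (by omega)⟩, h1⟩
    rw [hfil]
    have : ∑ d ∈ (k+1).divisors, (N d : ℚ) * ((d : ℚ) * e ^ (k+1))
        = e ^ (k+1) * ∑ d ∈ (k+1).divisors, (d : ℚ) * N d := by
      rw [Finset.mul_sum]; exact Finset.sum_congr rfl fun d _ => by ring
    rw [this, hN (k+1) (Nat.succ_pos k) (by omega), he]
    rw [one_div, inv_pow, inv_mul_cancel₀ (pow_ne_zero _ hq0)]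
  -- X^n divides 1 - (1-X)*T
  have hdvd1 : (X : ℚ⟦X⟧) ^ n ∣ 1 - (1 - X) * T := by
    rw [PowerSeries.X_pow_dvd_iff]
    intro m hm
    have h1 : (1 - X) * T = T - X * T := by ring
    rw [map_sub, h1, map_sub]
    rcases m with _ | j
    · rw [PowerSeries.coeff_zero_X_mul, hcoeffT 0 hm]
      simp
    · rw [PowerSeries.coeff_succ_X_mul, hcoeffT _ hm, hcoeffT j (by omega)]
      simp [PowerSeries.coeff_one]
  -- S * Pg = -T
  have hSgeo : S * Pg = -T := by
    rw [hS, Finset.sum_mul, hT, ← Finset.sum_neg_distrib]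
    refine Finset.sum_congr rfl fun i hi => ?_
    have h1 : (∏ j ∈ (Icc 1 n).erase i, F j) * Pg = geoAux e i := by
      rw [hPg, ← Finset.mul_prod_erase _ _ hi, mul_comm (geoAux e i) _, ← mul_assoc,
        ← Finset.prod_mul_distrib]
      rw [Finset.prod_eq_one fun j hj => geoAux_mul e j (hmem j (Finset.mem_of_mem_erase hj)),
        one_mul]
    have hDF : d⁄dX ℚ (F i) = -(d⁄dX ℚ (t ^ i)) := by
      rw [hF]; simp
    have hdg := deriv_geo e i (hmem i hi)
    rw [← ht] at hdg
    rw [mul_assoc, h1, hDF]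
    linear_combination (-(N i : ℚ⟦X⟧)) * hdg
  have hA' : d⁄dX ℚ A * Pf = A * S := prodDerivAux F N (Icc 1 n)
  have key : d⁄dX ℚ A * (1 - X) + A = A * (1 - (1 - X) * T) := by
    have h8 : d⁄dX ℚ A * (1 - X) + A = (d⁄dX ℚ A * (1 - X) + A) * (Pf * Pg) := by
      rw [hPQ, mul_one]
    rw [h8]
    linear_combination ((1 - X) * Pg) * hA' + A * hPQ + ((1 - X) * A) * hSgeo
  -- pass to Z
  set Z : ℚ⟦X⟧ := A - (1 - X) with hZ
  have hrelZ : d⁄dX ℚ Z * (1 - X) + Z = d⁄dX ℚ A * (1 - X) + A := by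
    have : d⁄dX ℚ Z = d⁄dX ℚ A + 1 := by
      rw [hZ]; simp
    rw [this]; ring
  have hdvdZ : (X : ℚ⟦X⟧) ^ n ∣ d⁄dX ℚ Z * (1 - X) + Z := by
    rw [hrelZ, key]
    exact Dvd.dvd.mul_left hdvd1 A
  have hcoeffZ : ∀ j, j < n → PowerSeries.coeff (R := ℚ) j (d⁄dX ℚ Z * (1 - X) + Z) = 0 :=
    PowerSeries.X_pow_dvd_iff.mp hdvdZ
  have hZ0 : PowerSeries.coeff (R := ℚ) 0 Z = 0 := by
    rw [hZ, map_sub, hA]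
    have : PowerSeries.coeff (R := ℚ) 0 A = PowerSeries.constantCoeff (R := ℚ) A := by
      rw [PowerSeries.coeff_zero_eq_constantCoeff]
    rw [hA] at this
    rw [this, map_prod]
    have : ∀ i ∈ Icc 1 n, PowerSeries.constantCoeff (R := ℚ) (F i ^ N i) = 1 := by
      intro i hi
      rw [map_pow, hF]
      simp only [map_sub, map_one, map_pow]
      rw [ht, map_mul, PowerSeries.constantCoeff_X, mul_zero,
        zero_pow (by have := hmem i hi; omega), sub_zero, one_pow]
    rw [Finset.prod_eq_one this]
    simp
  have hZall : ∀ k, k ≤ n → PowerSeries.coeff (R := ℚ) k Z = 0 := by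
    intro k
    induction k with
    | zero => intro _; exact hZ0
    | succ k ihk =>
      intro hk1
      have hk : k < n := by omega
      have ihk' := ihk (by omega)
      have h0 := hcoeffZ k hk
      have hexp : (1 : ℚ⟦X⟧) - X = 1 - X := rfl
      have h1 : d⁄dX ℚ Z * (1 - X) = d⁄dX ℚ Z - X * d⁄dX ℚ Z := by ring
      rw [map_add, h1, map_sub, PowerSeries.coeff_derivative, ihk'] at h0
      rcases Nat.eq_zero_or_pos k with rfl | hkpos
      · rw [PowerSeries.coeff_zero_X_mul] at h0
        simpa using h0
      · obtain ⟨j, rfl⟩ := Nat.exists_eq_succ_of_ne_zero (by omega : k ≠ 0)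
        rw [PowerSeries.coeff_succ_X_mul, PowerSeries.coeff_derivative, ihk'] at h0
        have h2 : PowerSeries.coeff (R := ℚ) (j + 1 + 1) Z * ((j:ℚ) + 1 + 1) = 0 := by
          rw [zero_mul, sub_zero, add_zero] at h0
          push_cast at h0 ⊢
          linarith [h0]
        have h3 : ((j : ℚ) + 1 + 1) ≠ 0 := by positivity
        exact (mul_eq_zero.mp h2).resolve_right h3
  intro k hk
  have := hZall k hk
  rw [hZ, map_sub, sub_eq_zero] at this
  exact this

end AuxIrr5

section AuxIrr6
open Finset

lemma divSumAux (q : ℕ) (M : ℕ → ℕ)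
    (hM : ∀ i : ℕ, 0 < i →
      (i : ℤ) * M i = ∑ d ∈ i.divisors, ArithmeticFunction.moebius d * ((q : ℤ) ^ (i / d) - 1)) :
    ∀ m : ℕ, 0 < m → (∑ d ∈ m.divisors, (d : ℤ) * M d) = (q : ℤ) ^ m - 1 := by
  have h := (ArithmeticFunction.sum_eq_iff_sum_mul_moebius_eq
    (R := ℤ) (f := fun i => (i : ℤ) * M i) (g := fun m => (q : ℤ) ^ m - 1)).mpr ?_
  · intro m hm; exact h m hm
  · intro m hm
    simp only [Int.cast_id]
    rw [Nat.sum_divisorsAntidiagonal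
      (fun x y => (ArithmeticFunction.moebius x : ℤ) * ((q : ℤ) ^ y - 1))]
    exact (hM m hm).symm

end AuxIrr6

/-- As formal power series in `u` over `ℚ`:
`∏_{i ≥ 1} (1 - u^i/q^i)^(-M_i) = 1 + (q-1)u/(q(1-u))`, where
`M_i = (1/i) ∑_{d ∣ i} μ(d) (q^(i/d) - 1)`.  The identity is stated coefficientwise; since the
`i`-th factor is `1 + O(u^i)`, the coefficient of `u^n` only involves factors with `i ≤ n`. -/
theorem prod_nonzero_constant_irreducible_count
    (q : ℕ) (hq : 2 ≤ q) (M : ℕ → ℕ)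
    (hM : ∀ i : ℕ, 0 < i →
      (i : ℤ) * M i = ∑ d ∈ i.divisors, ArithmeticFunction.moebius d * ((q : ℤ) ^ (i / d) - 1))
    (n : ℕ) :
    PowerSeries.coeff (R := ℚ) n
      (∏ i ∈ Finset.Icc 1 n,
        ((1 - (PowerSeries.C (R := ℚ) (1 / q) * PowerSeries.X) ^ i)⁻¹) ^ M i) =
    PowerSeries.coeff (R := ℚ) n
      (1 + PowerSeries.C (R := ℚ) ((q - 1) / q) * PowerSeries.X * (1 - PowerSeries.X)⁻¹) := by
  have hq0 : (q : ℚ) ≠ 0 := by positivity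
  rcases Nat.eq_zero_or_pos n with rfl | hn
  · rw [show Finset.Icc 1 0 = (∅ : Finset ℕ) by rfl, Finset.prod_empty, map_add,
      mul_assoc, PowerSeries.coeff_C_mul, PowerSeries.coeff_zero_X_mul]
    simp
  set N : ℕ → ℕ := fun i => M i + (if i = 1 then 1 else 0) with hN
  have hNQ : ∀ m : ℕ, 0 < m → m ≤ n →
      ∑ d ∈ m.divisors, (d : ℚ) * N d = (q : ℚ) ^ m := by
    intro m hm _
    have hz := divSumAux q M hM m hm
    have hzq : ((∑ d ∈ m.divisors, (d : ℤ) * M d : ℤ) : ℚ) = ((q : ℚ) ^ m - 1) := by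
      rw [hz]; push_cast; ring
    push_cast at hzq
    have hsplit : ∑ d ∈ m.divisors, (d : ℚ) * N d =
        (∑ d ∈ m.divisors, (d : ℚ) * M d) +
        (∑ d ∈ m.divisors, (if d = 1 then (1 : ℚ) else 0)) := by
      rw [← Finset.sum_add_distrib]
      refine Finset.sum_congr rfl fun d _ => ?_
      rw [hN]
      push_cast
      split_ifs with h
      · subst h; push_cast; ring
      · ring
    rw [hsplit, hzq, Finset.sum_ite_eq' m.divisors 1 (fun _ => (1:ℚ)),
      if_pos (Nat.one_mem_divisors.mpr hm.ne')]
    ring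
  have hcong := coreAux q hq N n hNQ
  set e : ℚ := 1 / q with he
  set t : ℚ⟦X⟧ := PowerSeries.C (R := ℚ) e * X with ht
  set F : ℕ → ℚ⟦X⟧ := fun i => 1 - t ^ i with hF
  set Y : ℚ⟦X⟧ := (1 - X)⁻¹ with hY
  set A : ℚ⟦X⟧ := ∏ i ∈ Finset.Icc 1 n, F i ^ N i with hA
  set A0 : ℚ⟦X⟧ := ∏ i ∈ Finset.Icc 1 n, F i ^ M i with hA0
  set Ainv : ℚ⟦X⟧ := ∏ i ∈ Finset.Icc 1 n, ((F i)⁻¹) ^ M i with hAinv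
  have hconst : ∀ i, 1 ≤ i → PowerSeries.constantCoeff (R := ℚ) (F i) = 1 := by
    intro i hi
    rw [hF]
    simp only [map_sub, map_one, map_pow, ht, map_mul, PowerSeries.constantCoeff_X, mul_zero]
    rw [zero_pow (by omega), sub_zero]
  have hinv : Ainv * A0 = 1 := by
    rw [hAinv, hA0, ← Finset.prod_mul_distrib]
    refine Finset.prod_eq_one fun i hi => ?_
    rw [← mul_pow, PowerSeries.inv_mul_cancel _ (by
      rw [hconst i (Finset.mem_Icc.mp hi).1]; norm_num), one_pow]
  have hA0A : A = (1 - t) * A0 := by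
    rw [hA, hA0]
    have : ∀ i ∈ Finset.Icc 1 n, F i ^ N i = F i ^ M i * (if i = 1 then F i else 1) := by
      intro i _
      rw [hN, pow_add]
      congr 1
      split_ifs <;> simp
    rw [Finset.prod_congr rfl this, Finset.prod_mul_distrib,
      Finset.prod_ite_eq' (Finset.Icc 1 n) 1 F, if_pos (Finset.mem_Icc.mpr ⟨le_refl 1, hn⟩)]
    have : F 1 = 1 - t := by rw [hF]; simp
    rw [this, mul_comm]
  have hu : (1 - X : ℚ⟦X⟧) * Y = 1 := by
    rw [hY]
    refine PowerSeries.mul_inv_cancel _ ?_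
    simp
  have hRHS : (1 : ℚ⟦X⟧) + PowerSeries.C (R := ℚ) ((q - 1) / q) * X * Y = (1 - t) * Y := by
    have hC : PowerSeries.C (R := ℚ) ((q - 1) / q) = 1 - PowerSeries.C (R := ℚ) e := by
      rw [he, ← map_one (PowerSeries.C (R := ℚ)), ← map_sub]
      congr 1
      field_simp
    rw [hC, ht]
    linear_combination -hu
  have hdvdA : (X : ℚ⟦X⟧) ^ (n + 1) ∣ (1 - X) - A := by
    rw [PowerSeries.X_pow_dvd_iff]
    intro m hm
    rw [map_sub, hcong m (by omega), sub_self]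
  have hdiff : Ainv - (1 + PowerSeries.C (R := ℚ) ((q - 1) / q) * X * Y) =
      (Ainv * Y) * ((1 - X) - A) := by
    linear_combination (Ainv * Y) * hA0A - hRHS - Ainv * hu + ((1 - t) * Y) * hinv
  have hdvd2 : (X : ℚ⟦X⟧) ^ (n + 1) ∣
      Ainv - (1 + PowerSeries.C (R := ℚ) ((q - 1) / q) * X * Y) := by
    rw [hdiff]
    exact Dvd.dvd.mul_left hdvdA (Ainv * Y)
  have := PowerSeries.X_pow_dvd_iff.mp hdvd2 n (by omega)
  rw [map_sub, sub_eq_zero] at this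
  exact this
end

section
/- For a permutation w of {1,...,n}, define cd(w) (number of cyclic descents) as the number of indices i with 1 ≤ i ≤ n-1 such that w(i) > w(i+1), plus 1 if w(n) > w(1). Then the sum over all w in S_n of (1/(n k^{n-1})) * C(n + k - cd(w) - 1, n - 1) equals 1, for every integer k ≥ 1. -/
open Equiv Finset

/-- The number of cyclic descents of `w`: descents at positions `1 ≤ i ≤ n-1` (0-indexed here),
plus one if `w(n) > w(1)`; equivalently, the number of positions `i` (mod `n`) with
`w(i) > w(i+1 mod n)`. -/
def cycDes {n : ℕ} (w : Perm (Fin n)) : ℕ :=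
  (Finset.univ.filter (fun i : Fin n =>
    w ⟨((i : ℕ) + 1) % n, Nat.mod_lt _ i.pos⟩ < w i)).card

namespace ShuffleAux

variable {M k : ℕ}

/-- descent count of a permutation of `Fin (M+1)` -/
def dsc {M : ℕ} (u : Perm (Fin (M+1))) : ℕ :=
  (univ.filter (fun i : Fin M => u i.succ < u i.castSucc)).card

lemma dsc_le (u : Perm (Fin (M+1))) : dsc u ≤ M := by
  calc dsc u ≤ (univ : Finset (Fin M)).card := card_filter_le _ _
  _ = M := by simp

lemma dsc_add_eq (u : Perm (Fin (M+1))) :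
    dsc u + (univ.filter (fun i : Fin M => ¬ u i.succ < u i.castSucc)).card = M := by
  unfold dsc
  rw [card_filter, card_filter, ← Finset.sum_add_distrib]
  have key : ∀ i : Fin M, ((if u i.succ < u i.castSucc then 1 else 0)
      + (if ¬ u i.succ < u i.castSucc then 1 else 0)) = 1 := by
    intro i; by_cases hd : u i.succ < u i.castSucc <;> simp [hd]
  rw [Finset.sum_congr rfl fun i _ => key i]
  simp

/-- number of non-descents strictly below `j` -/
def cfun (u : Perm (Fin (M+1))) (j : Fin (M+1)) : ℕ :=
  (univ.filter (fun i : Fin M => (i : ℕ) < (j : ℕ) ∧ ¬ u i.succ < u i.castSucc)).card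

lemma cfun_zero (u : Perm (Fin (M+1))) : cfun u 0 = 0 := by
  simp [cfun]

lemma cfun_le (u : Perm (Fin (M+1))) (j : Fin (M+1)) : cfun u j ≤ M - dsc u := by
  have h1 : cfun u j ≤ (univ.filter (fun i : Fin M => ¬ u i.succ < u i.castSucc)).card := by
    apply card_le_card
    intro x hx
    simp only [mem_filter] at hx ⊢
    exact ⟨hx.1, hx.2.2⟩
  have h2 := dsc_add_eq u
  omega

lemma cfun_last (u : Perm (Fin (M+1))) : cfun u (Fin.last M) = M - dsc u := by
  have h2 := dsc_add_eq u
  have h3 : cfun u (Fin.last M)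
      = (univ.filter (fun i : Fin M => ¬ u i.succ < u i.castSucc)).card := by
    unfold cfun
    apply congrArg
    apply filter_congr
    intro i _
    simp only [Fin.val_last]
    exact ⟨fun h => h.2, fun h => ⟨i.is_lt, h⟩⟩
  omega

lemma cfun_succ (u : Perm (Fin (M+1))) (i : Fin M) :
    cfun u i.succ = cfun u i.castSucc + (if u i.succ < u i.castSucc then 0 else 1) := by
  unfold cfun
  rw [card_filter, card_filter]
  have key : ∀ i' : Fin M,
      (if ((i' : ℕ) < (i.succ : ℕ) ∧ ¬ u i'.succ < u i'.castSucc) then 1 else 0) =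
      (if ((i' : ℕ) < (i.castSucc : ℕ) ∧ ¬ u i'.succ < u i'.castSucc) then 1 else 0) +
      (if i' = i then (if ¬ u i'.succ < u i'.castSucc then 1 else 0) else 0) := by
    intro i'
    have hs : (i.succ : ℕ) = (i : ℕ) + 1 := rfl
    have hc : (i.castSucc : ℕ) = (i : ℕ) := rfl
    by_cases he : i' = i
    · subst he
      have h1 : ¬((i' : ℕ) < ((Fin.castSucc i') : ℕ)) := by omega
      have h2 : ((i' : ℕ) < ((Fin.succ i') : ℕ)) := by rw [hs]; omega
      by_cases hd : u i'.succ < u i'.castSucc <;> simp [h1, h2, hd]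
    · have hne : (i' : ℕ) ≠ (i : ℕ) := fun h => he (Fin.ext h)
      have hiff : ((i' : ℕ) < (i.succ : ℕ)) ↔ ((i' : ℕ) < (i.castSucc : ℕ)) := by
        rw [hs, hc]; omega
      rw [if_neg he, add_zero]
      exact if_congr (and_congr_left' hiff) rfl rfl
  rw [Finset.sum_congr rfl (fun i' _ => key i'), Finset.sum_add_distrib,
    Finset.sum_ite_eq' univ i]
  rw [if_pos (mem_univ i)]
  congr 1
  by_cases hd : u i.succ < u i.castSucc <;> simp [hd]

lemma cfun_le_apply {K : ℕ} (u : Perm (Fin (M+1))) (h : Fin (M+1) → Fin K)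
    (hh : StrictMono h) (j : Fin (M+1)) : cfun u j ≤ (h j : ℕ) := by
  induction j using Fin.induction with
  | zero => simp [cfun_zero]
  | succ i ih =>
    have h1 := cfun_succ u i
    have h2 : (h i.castSucc : ℕ) < (h i.succ : ℕ) := hh (Fin.castSucc_lt_succ (i := i))
    split_ifs at h1 <;> omega

lemma lt_add_cfun {K : ℕ} (u : Perm (Fin (M+1))) (hK : K = k + (M - dsc u))
    (h : Fin (M+1) → Fin K) (hh : StrictMono h) (j : Fin (M+1)) :
    (h j : ℕ) < k + cfun u j := by
  induction j using Fin.reverseInduction with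
  | last =>
    have := (h (Fin.last M)).is_lt
    rw [cfun_last]; omega
  | cast i ih =>
    have h1 := cfun_succ u i
    have h2 : (h i.castSucc : ℕ) < (h i.succ : ℕ) := hh (Fin.castSucc_lt_succ (i := i))
    split_ifs at h1 <;> omega

lemma adj_iff (u : Perm (Fin (M+1))) (g : Fin (M+1) → Fin k) (hg : Monotone g) :
    (∀ i j, i < j → g i = g j → u i < u j) ↔
      (∀ i : Fin M, u i.succ < u i.castSucc → g i.castSucc < g i.succ) := by
  constructor
  · intro h i hd
    rcases lt_or_eq_of_le (hg (Fin.castSucc_lt_succ (i := i)).le) with h' | h'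
    · exact h'
    · exact absurd (h _ _ (Fin.castSucc_lt_succ (i := i)) h') (asymm hd)
  · intro h
    have adj : ∀ i j : Fin (M+1), (j : ℕ) = (i : ℕ) + 1 → g i = g j → u i < u j := by
      intro i j hj hgij
      have hiM : (i : ℕ) < M := by omega
      have hci : Fin.castSucc ⟨i, hiM⟩ = i := by ext; simp
      have hsi : Fin.succ ⟨i, hiM⟩ = j := by ext; simp [hj]
      have hne : u i ≠ u j := by
        intro he
        have h2 : (i : ℕ) = (j : ℕ) := congrArg Fin.val (u.injective he)
        omega
      rcases hne.lt_or_gt with h' | h'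
      · exact h'
      · exfalso
        have hlt := h ⟨i, hiM⟩ (by rwa [hci, hsi])
        rw [hci, hsi] at hlt
        exact absurd hgij (ne_of_lt hlt)
    have key : ∀ t, ∀ i j : Fin (M+1), (j : ℕ) = (i : ℕ) + t + 1 → g i = g j → u i < u j := by
      intro t
      induction t with
      | zero => intro i j hj; exact adj i j (by omega)
      | succ t ih =>
        intro i j hj hgij
        set i1 : Fin (M+1) := ⟨(i : ℕ) + 1, by omega⟩ with hi1
        have h1 : g i = g i1 := le_antisymm (hg (by rw [Fin.le_def]; simp [hi1]))
          (hgij ▸ hg (by rw [Fin.le_def]; simp [hi1]; omega))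
        exact (adj i i1 (by simp [hi1]) h1).trans (ih i1 j (by simp [hi1]; omega) (h1 ▸ hgij))
    intro i j hij hgij
    have hv : (j : ℕ) = (i : ℕ) + ((j : ℕ) - (i : ℕ) - 1) + 1 := by
      have := (Fin.lt_def).1 hij; omega
    exact key _ i j hv hgij

/-- count of strictly monotone maps -/
lemma card_strictMono (m K : ℕ) :
    Nat.card {h : Fin m → Fin K // StrictMono h} = K.choose m := by
  classical
  have e : {h : Fin m → Fin K // StrictMono h} ≃ {s : Finset (Fin K) // s.card = m} :=
    { toFun := fun h => ⟨univ.image h.1, by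
        rw [card_image_of_injective _ h.2.injective, card_univ, Fintype.card_fin]⟩
      invFun := fun s => ⟨s.1.orderEmbOfFin s.2, (s.1.orderEmbOfFin s.2).strictMono⟩
      left_inv := fun h => by
        ext1
        exact (Finset.orderEmbOfFin_unique _ (fun x => mem_image_of_mem _ (mem_univ x)) h.2).symm
      right_inv := fun s => by
        ext1
        apply eq_of_subset_of_card_le
        · intro x hx
          rcases mem_image.1 hx with ⟨y, _, rfl⟩
          exact Finset.orderEmbOfFin_mem _ _ _
        · rw [s.2, card_image_of_injective _ (s.1.orderEmbOfFin s.2).strictMono.injective,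
            card_univ, Fintype.card_fin] }
  rw [Nat.card_congr e, Nat.card_eq_fintype_card, Fintype.card_finset_len, Fintype.card_fin]

lemma fiber_card (u : Perm (Fin (M+1))) (hk : 1 ≤ k) :
    Nat.card {f : Fin (M+1) → Fin k // Tuple.sort f = u} = (k + (M - dsc u)).choose (M+1) := by
  have e1 : {f : Fin (M+1) → Fin k // Tuple.sort f = u} ≃
      {g : Fin (M+1) → Fin k // Monotone g ∧
        ∀ i : Fin M, u i.succ < u i.castSucc → g i.castSucc < g i.succ} :=
    { toFun := fun f => by
        refine ⟨fun i => f.1 (u i), ?_⟩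
        have h := (Tuple.eq_sort_iff).1 f.2.symm
        exact ⟨h.1, (adj_iff u _ h.1).1 h.2⟩
      invFun := fun g => by
        refine ⟨fun x => g.1 (u⁻¹ x), ?_⟩
        rw [eq_comm, Tuple.eq_sort_iff]
        have hco : ((fun x => g.1 (u⁻¹ x)) ∘ u) = g.1 := by
          funext i; simp
        rw [hco]
        simp only [Perm.inv_def, Equiv.symm_apply_apply]
        exact ⟨g.2.1, (adj_iff u _ g.2.1).2 g.2.2⟩
      left_inv := fun f => by ext x; simp
      right_inv := fun g => by ext x; simp }
  have hd := dsc_le u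
  have e2 : {g : Fin (M+1) → Fin k // Monotone g ∧
        ∀ i : Fin M, u i.succ < u i.castSucc → g i.castSucc < g i.succ} ≃
      {h : Fin (M+1) → Fin (k + (M - dsc u)) // StrictMono h} :=
    { toFun := fun g => by
        refine ⟨fun j => ⟨(g.1 j : ℕ) + cfun u j, ?_⟩, ?_⟩
        · have := (g.1 j).is_lt
          have := cfun_le u j
          omega
        · rw [Fin.strictMono_iff_lt_succ]
          intro i
          rw [Fin.lt_def]
          simp only
          have hcs := cfun_succ u i
          by_cases hdd : u i.succ < u i.castSucc
          · have hlt := g.2.2 i hdd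
            rw [Fin.lt_def] at hlt
            rw [if_pos hdd] at hcs
            omega
          · have hle := g.2.1 (Fin.castSucc_lt_succ (i := i)).le
            rw [Fin.le_def] at hle
            rw [if_neg hdd] at hcs
            omega
      invFun := fun h => by
        refine ⟨fun j => ⟨(h.1 j : ℕ) - cfun u j, ?_⟩, ?_, ?_⟩
        · have := lt_add_cfun u rfl h.1 h.2 j
          omega
        · rw [Fin.monotone_iff_le_succ]
          intro i
          rw [Fin.le_def]
          simp only
          have hcs := cfun_succ u i
          have h2 : (h.1 i.castSucc : ℕ) < (h.1 i.succ : ℕ) := h.2 (Fin.castSucc_lt_succ (i := i))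
          have hle := cfun_le_apply u h.1 h.2 i.castSucc
          split_ifs at hcs <;> omega
        · intro i hdd
          rw [Fin.lt_def]
          simp only
          have hcs := cfun_succ u i
          rw [if_pos hdd] at hcs
          have h2 : (h.1 i.castSucc : ℕ) < (h.1 i.succ : ℕ) := h.2 (Fin.castSucc_lt_succ (i := i))
          have hle := cfun_le_apply u h.1 h.2 i.castSucc
          omega
      left_inv := fun g => by
        ext j
        simp
      right_inv := fun h => by
        ext j
        simp only
        have hle := cfun_le_apply u h.1 h.2 j
        omega }
  rw [Nat.card_congr (e1.trans e2), card_strictMono]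

lemma worpitzky (M k : ℕ) (hk : 1 ≤ k) :
    ∑ u : Perm (Fin (M+1)), (k + (M - dsc u)).choose (M+1) = k^(M+1) := by
  classical
  have h1 : (k:ℕ)^(M+1) = Nat.card (Fin (M+1) → Fin k) := by
    simp [Nat.card_eq_fintype_card]
  have e := Equiv.sigmaFiberEquiv (fun f : Fin (M+1) → Fin k => Tuple.sort f)
  rw [h1, ← Nat.card_congr e, Nat.card_eq_fintype_card, Fintype.card_sigma]
  refine (Finset.sum_congr rfl (fun u _ => ?_)).symm
  rw [← Nat.card_eq_fintype_card, fiber_card u hk]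

variable {N : ℕ}

/-- the permutation with word `n-1, u 0, u 1, ...` -/
def V (u : Perm (Fin (N+1))) : Perm (Fin (N+2)) :=
  (finSuccEquiv (N+1)).trans ((Equiv.optionCongr u).trans (finSuccEquiv' (Fin.last (N+1))).symm)

lemma V_zero (u : Perm (Fin (N+1))) : V u 0 = Fin.last (N+1) := by
  simp [V, finSuccEquiv_zero, finSuccEquiv'_symm_none]

lemma V_succ (u : Perm (Fin (N+1))) (j : Fin (N+1)) : V u j.succ = (u j).castSucc := by
  simp only [V, Equiv.trans_apply, finSuccEquiv_succ, Equiv.optionCongr_apply, Option.map_some]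
  rw [Equiv.symm_apply_eq]
  exact (finSuccEquiv'_below (Fin.castSucc_lt_last (u j))).symm

/-- shuffle-cut parametrization of permutations -/
def phi : Fin (N+2) × Perm (Fin (N+1)) → Perm (Fin (N+2)) :=
  fun p => (Equiv.addRight p.1).trans (V p.2)

lemma phi_apply (p : Fin (N+2) × Perm (Fin (N+1))) (i : Fin (N+2)) :
    phi p i = V p.2 (i + p.1) := rfl

lemma phi_bijective : Function.Bijective (phi (N := N)) := by
  rw [Fintype.bijective_iff_injective_and_card]
  constructor
  · rintro ⟨c, u⟩ ⟨c', u'⟩ h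
    have hV0 : ∀ (v : Perm (Fin (N+1))) (j : Fin (N+2)), V v j = Fin.last (N+1) → j = 0 := by
      intro v j hj
      apply (V v).injective
      rw [hj, V_zero]
    have h1 : V u (-c + c) = Fin.last (N+1) := by
      rw [neg_add_cancel, V_zero]
    have h2 : V u' (-c + c') = Fin.last (N+1) := by
      rw [← phi_apply (c', u'), ← h, phi_apply]
      exact h1
    have hc : c = c' := by
      have h3 := hV0 u' _ h2
      have h4 : -c + c' = 0 := h3
      have h5 := congrArg (fun x => c + x) h4
      have h6 : c' = c := by simpa [← add_assoc] using h5
      exact h6.symm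
    subst hc
    have hu : u = u' := by
      ext j
      have h5 := Equiv.ext_iff.1 h (j.succ - c)
      rw [phi_apply, phi_apply, sub_add_cancel] at h5
      rw [V_succ, V_succ] at h5
      have h6 := Fin.castSucc_injective _ h5
      exact congrArg Fin.val h6
    rw [hu]
  · simp [Fintype.card_perm, Nat.factorial_succ]

lemma cycDes_def' (w : Perm (Fin (N+2))) :
    cycDes w = (univ.filter (fun i : Fin (N+2) => w (i+1) < w i)).card := by
  unfold cycDes
  apply congrArg
  apply filter_congr
  intro i _
  have hfin : (⟨((i : ℕ) + 1) % (N+2), Nat.mod_lt _ i.pos⟩ : Fin (N+2)) = i + 1 := by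
    ext
    rw [Fin.add_def]
    norm_num
  rw [hfin]

lemma cycDes_phi (c : Fin (N+2)) (u : Perm (Fin (N+1))) :
    cycDes (phi (c, u)) = dsc u + 1 := by
  rw [cycDes_def']
  have hre : (univ.filter (fun i : Fin (N+2) => phi (c,u) (i+1) < phi (c,u) i)).card
      = (univ.filter (fun j : Fin (N+2) => V u (j+1) < V u j)).card := by
    apply Finset.card_bij' (fun i _ => i + c) (fun j _ => j - c)
    · intro i hi
      simp only [mem_filter, mem_univ, true_and] at hi ⊢
      rw [phi_apply, phi_apply] at hi
      rwa [add_right_comm] at hi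
    · intro j hj
      simp only [mem_filter, mem_univ, true_and] at hj ⊢
      rw [phi_apply, phi_apply]
      rwa [sub_add_cancel, add_right_comm, sub_add_cancel]
    · intro i _
      show i + c - c = i
      abel
    · intro j _
      show j - c + c = j
      abel
  rw [hre, card_filter, Fin.sum_univ_succ]
  have hP0 : V u (0 + 1) < V u 0 := by
    rw [V_zero, zero_add, ← Fin.succ_zero_eq_one, V_succ]
    exact Fin.castSucc_lt_last _
  rw [if_pos hP0]
  rw [Fin.sum_univ_castSucc]
  have hlast : ¬ (V u ((Fin.last N).succ + 1) < V u ((Fin.last N).succ)) := by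
    rw [Fin.succ_last, Fin.last_add_one, V_zero]
    exact not_lt.2 (Fin.le_last _)
  rw [if_neg hlast, add_zero]
  have hterm : ∀ j' : Fin N,
      (if V u ((Fin.castSucc j').succ + 1) < V u ((Fin.castSucc j').succ) then 1 else 0)
      = (if u j'.succ < u j'.castSucc then 1 else 0) := by
    intro j'
    have h1 : (Fin.castSucc j').succ + 1 = (j'.succ).succ := by
      ext
      rw [Fin.add_def]
      simp [Fin.val_succ]
    rw [h1, V_succ, V_succ]
    have : ((u j'.succ).castSucc < (u j'.castSucc).castSucc) ↔ (u j'.succ < u j'.castSucc) :=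
      Fin.castSucc_lt_castSucc_iff
    exact if_congr this rfl rfl
  rw [Finset.sum_congr rfl (fun j' _ => hterm j')]
  rw [← card_filter]
  unfold dsc
  omega

end ShuffleAux

/-- The `k`-riffle-shuffle-followed-by-cut probabilities sum to 1 over `S_n`. -/
theorem shuffle_cut_prob_sum_eq_one (n k : ℕ) (hn : 1 ≤ n) (hk : 1 ≤ k) :
    ∑ w : Perm (Fin n),
      (1 / (n * (k : ℚ) ^ (n - 1))) * (Nat.choose (n + k - cycDes w - 1) (n - 1)) = 1 := by
  open ShuffleAux in
  have hk0 : (k : ℚ) ≠ 0 := Nat.cast_ne_zero.2 (by omega)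
  obtain _ | n' := n
  · omega
  obtain _ | N := n'
  · -- n = 1
    have hc : ∀ w : Perm (Fin 1), cycDes w = 0 := by
      intro w
      unfold cycDes
      rw [Finset.card_eq_zero, Finset.filter_eq_empty_iff]
      intro i _
      have he : (⟨((i : ℕ) + 1) % 1, Nat.mod_lt _ i.pos⟩ : Fin 1) = i := Subsingleton.elim _ _
      rw [he]
      exact lt_irrefl _
    have hterm : ∀ w : Perm (Fin 1),
        (1 / ((1:ℕ) * (k : ℚ) ^ (1 - 1))) * (Nat.choose (1 + k - cycDes w - 1) (1 - 1))
          = 1 := by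
      intro w
      rw [hc w]
      norm_num
    rw [Finset.sum_congr rfl (fun w _ => hterm w)]
    simp [Fintype.card_perm]
  · -- n = N + 2
    simp only [Nat.add_sub_cancel]
    rw [← Fintype.sum_bijective phi phi_bijective _ _ (fun p => rfl), Fintype.sum_prod_type]
    have hterm : ∀ (c : Fin (N+2)) (u : Perm (Fin (N+1))),
        (1 / ((((N+1+1) : ℕ) : ℚ) * (k : ℚ) ^ (N+1))) *
            (Nat.choose ((N+1+1) + k - cycDes (phi (c, u)) - 1) (N+1))
          = (1 / ((((N+1+1) : ℕ) : ℚ) * (k : ℚ) ^ (N+1))) *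
            (Nat.choose (k + (N - dsc u)) (N+1)) := by
      intro c u
      rw [cycDes_phi]
      have h1 : (N+1+1) + k - (dsc u + 1) - 1 = k + (N - dsc u) := by
        have := dsc_le u; omega
      rw [h1]
    rw [Finset.sum_congr rfl (fun c _ => Finset.sum_congr rfl (fun u _ => hterm c u))]
    have hinner : ∑ u : Perm (Fin (N+1)),
        (1 / ((((N+1+1) : ℕ) : ℚ) * (k : ℚ) ^ (N+1))) *
          ((Nat.choose (k + (N - dsc u)) (N+1) : ℕ) : ℚ)
        = (1 / ((((N+1+1) : ℕ) : ℚ) * (k : ℚ) ^ (N+1))) * ((k : ℚ) ^ (N+1)) := by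
      rw [← Finset.mul_sum]
      congr 1
      rw [← Nat.cast_sum]
      rw [worpitzky N k hk]
      push_cast
      ring
    rw [Finset.sum_congr rfl (fun c _ => hinner)]
    rw [Finset.sum_const]
    have hN2 : ((((N+1+1) : ℕ)) : ℚ) ≠ 0 := by
      push_cast
      positivity
    simp only [card_univ, Fintype.card_fin, nsmul_eq_mul]
    rw [one_div, mul_inv]
    have hkp : ((k : ℚ) ^ (N+1)) ≠ 0 := pow_ne_zero _ hk0
    field_simp
end

section
/- Let e_n^j for j = 1,...,n be the Eulerian idempotents in the rational group algebra Q[S_n], defined by e_n^j = ∏_{i ≠ j, 1 ≤ i ≤ n} (s_n - μ_i)/(μ_j - μ_i), where s_n = ∑_{i=1}^{n-1} s_{i,n-i}, s_{i,n-i} is the sum of all permutations w with w(1)<...<w(i) and w(i+1)<...<w(n), and μ_j = 2^j - 2. Then the e_n^j are pairwise orthogonal idempotents summing to the identity of Q[S_n]. -/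
open Equiv Finset

/-- `s_{i,n-i}`: the sum in `ℚ[S_n]` of all permutations `w` with
`w(1) < ... < w(i)` and `w(i+1) < ... < w(n)`. -/
noncomputable def shuffleSum (n i : ℕ) : MonoidAlgebra ℚ (Perm (Fin n)) :=
  ∑ w ∈ Finset.univ.filter (fun w : Perm (Fin n) =>
      ∀ a b : Fin n, a < b → (((b : ℕ) < i) ∨ i ≤ (a : ℕ)) → w a < w b),
    MonoidAlgebra.single w 1

/-- `s_n = ∑_{i=1}^{n-1} s_{i,n-i}`. -/
noncomputable def sTotal (n : ℕ) : MonoidAlgebra ℚ (Perm (Fin n)) :=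
  ∑ i ∈ Finset.Icc 1 (n - 1), shuffleSum n i

/-- The Eulerian idempotent `e_n^j = ∏_{i ≠ j} (s_n - μ_i)/(μ_j - μ_i)` with `μ_i = 2^i - 2`
(the product taken over `i ∈ {1,...,n} \ {j}`; all factors commute, being polynomials in
`s_n`, so we take the product in increasing order of `i`). -/
noncomputable def euler (n j : ℕ) : MonoidAlgebra ℚ (Perm (Fin n)) :=
  (((((Finset.Icc 1 n).erase j).sort (· ≤ ·)).map (fun i =>
    (((2 ^ j - 2 : ℚ) - (2 ^ i - 2))⁻¹) • (sTotal n - ((2 ^ i - 2 : ℚ)) • 1))).prod)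



section Helpers
variable {n : ℕ} {α : Type*} [Preorder α]

lemma chainLt (v : Fin n → α) {i j : Fin n} (hij : i < j)
    (h : ∀ a : ℕ, (i : ℕ) ≤ a → a + 1 ≤ (j : ℕ) → ∀ h1 : a + 1 < n,
      v ⟨a, by omega⟩ < v ⟨a + 1, h1⟩) : v i < v j := by
  have main : ∀ t : ℕ, ∀ jv : ℕ, ∀ hj : jv < n, jv = (i : ℕ) + t + 1 → jv ≤ (j : ℕ) →
      v i < v ⟨jv, hj⟩ := by
    intro t
    induction t with
    | zero =>
      intro jv hj hjv hle
      subst hjv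
      have h2 := h (i : ℕ) le_rfl (by omega) (by omega)
      simpa using h2
    | succ t ih =>
      intro jv hj hjv hle
      subst hjv
      have h1 : v i < v ⟨(i : ℕ) + t + 1, by omega⟩ := ih _ (by omega) rfl (by omega)
      have h2 := h ((i : ℕ) + t + 1) (by omega) (by omega) (by omega)
      refine h1.trans ?_
      convert h2 using 2
      rw [Fin.mk.injEq]; omega
  have := main ((j : ℕ) - (i : ℕ) - 1) (j : ℕ) j.isLt (by omega) le_rfl
  simpa using this

lemma chainLe (v : Fin n → α) {i j : Fin n} (hij : i ≤ j)
    (h : ∀ a : ℕ, (i : ℕ) ≤ a → a + 1 ≤ (j : ℕ) → ∀ h1 : a + 1 < n,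
      v ⟨a, by omega⟩ ≤ v ⟨a + 1, h1⟩) : v i ≤ v j := by
  have main : ∀ t : ℕ, ∀ jv : ℕ, ∀ hj : jv < n, jv = (i : ℕ) + t → jv ≤ (j : ℕ) →
      v i ≤ v ⟨jv, hj⟩ := by
    intro t
    induction t with
    | zero =>
      intro jv hj hjv hle
      subst hjv
      simp
    | succ t ih =>
      intro jv hj hjv hle
      subst hjv
      have h1 : v i ≤ v ⟨(i : ℕ) + t, by omega⟩ := ih _ (by omega) rfl (by omega)
      have h2 := h ((i : ℕ) + t) (by omega) (by omega) (by omega)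
      refine h1.trans ?_
      convert h2 using 2
      rw [Fin.mk.injEq]; omega
  have := main ((j : ℕ) - (i : ℕ)) (j : ℕ) j.isLt (by omega) le_rfl
  simpa using this

lemma monotone_of_adjacent (v : Fin n → α)
    (h : ∀ a : ℕ, ∀ h1 : a + 1 < n, v ⟨a, by omega⟩ ≤ v ⟨a + 1, h1⟩) : Monotone v :=
  fun _ j hij => chainLe v hij (fun a _ _ h1 => h a h1)

lemma strictMono_of_adjacent (v : Fin n → α)
    (h : ∀ a : ℕ, ∀ h1 : a + 1 < n, v ⟨a, by omega⟩ < v ⟨a + 1, h1⟩) : StrictMono v :=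
  fun _ j hij => chainLt v hij (fun a _ _ h1 => h a h1)

end Helpers


section SortLemmas
variable {n : ℕ} {α β : Type*} [LinearOrder α] [LinearOrder β]

lemma sort_facts (f : Fin n → α) :
    Monotone (f ∘ Tuple.sort f) ∧
      ∀ i j, i < j → f (Tuple.sort f i) = f (Tuple.sort f j) →
        Tuple.sort f i < Tuple.sort f j :=
  Tuple.eq_sort_iff.mp rfl

lemma sort_comp_orderIso (φ : α ≃o β) (f : Fin n → α) :
    Tuple.sort (fun i => φ (f i)) = Tuple.sort f := by
  obtain ⟨hmono, hstab⟩ := sort_facts f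
  refine (Tuple.eq_sort_iff.mpr ⟨?_, ?_⟩).symm
  · exact fun i j hij => φ.monotone (hmono hij)
  · exact fun i j hij heq => hstab i j hij (φ.injective heq)

lemma sort_pair (f : Fin n → α) (g : Fin n → β) :
    Tuple.sort (fun i => toLex (g ((Tuple.sort f)⁻¹ i), f i))
      = Tuple.sort f * Tuple.sort g := by
  obtain ⟨hfm, hfs⟩ := sort_facts f
  obtain ⟨hgm, hgs⟩ := sort_facts g
  set w := Tuple.sort f with hw
  set u := Tuple.sort g with hu
  refine (Tuple.eq_sort_iff.mpr ⟨?_, ?_⟩).symm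
  · intro i j hij
    simp only [Function.comp_apply, Perm.mul_apply, Perm.coe_inv, Equiv.symm_apply_apply]
    rcases eq_or_lt_of_le hij with rfl | hlt
    · exact le_rfl
    rcases lt_or_eq_of_le (hgm hij : g (u i) ≤ g (u j)) with hgl | hge
    · exact Prod.Lex.le_iff.mpr (Or.inl hgl)
    · refine Prod.Lex.le_iff.mpr (Or.inr ⟨hge, ?_⟩)
      exact hfm (hgs i j hlt hge).le
  · intro i j hij heq
    simp only [Perm.mul_apply, Perm.coe_inv, Equiv.symm_apply_apply] at heq
    have h1 : g (u i) = g (u j) := congrArg (fun x => (ofLex x).1) heq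
    have h2 : f (w (u i)) = f (w (u j)) := congrArg (fun x => (ofLex x).2) heq
    have hu' : u i < u j := hgs i j hij h1
    have := hfs (u i) (u j) hu' h2
    simpa [Perm.mul_apply] using this

lemma sort_unique_codomain (f : Fin n → Fin 1) : Tuple.sort f = 1 := by
  have : Monotone f := fun i j _ => le_of_eq (Subsingleton.elim _ _)
  exact Tuple.sort_eq_refl_iff_monotone.mpr this

end SortLemmas

section Sig
variable (n : ℕ)

noncomputable def sigA (α : Type) [Fintype α] [LinearOrder α] :
    MonoidAlgebra ℚ (Perm (Fin n)) :=
  ∑ f : Fin n → α, MonoidAlgebra.single (Tuple.sort f) 1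

noncomputable def sig (m : ℕ) : MonoidAlgebra ℚ (Perm (Fin n)) := sigA n (Fin m)

lemma sigA_eq_sig (α : Type) [Fintype α] [LinearOrder α] {m : ℕ}
    (h : Fintype.card α = m) : sigA n α = sig n m := by
  unfold sigA sig
  set φ := monoEquivOfFin α h with hφ
  refine (Fintype.sum_equiv
    ⟨fun f i => φ (f i), fun g i => φ.symm (g i),
      fun f => funext fun i => φ.symm_apply_apply _,
      fun g => funext fun i => φ.apply_symm_apply _⟩
    (fun f => MonoidAlgebra.single (Tuple.sort f) (1 : ℚ))
    (fun f => MonoidAlgebra.single (Tuple.sort f) (1 : ℚ)) ?_).symm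
  intro x
  simp only [Equiv.coe_fn_mk]
  rw [sort_comp_orderIso φ x]

lemma sig_one : sig n 1 = 1 := by
  unfold sig sigA
  rw [Fintype.sum_eq_single (fun (_ : Fin n) => (0 : Fin 1))]
  · rw [sort_unique_codomain, MonoidAlgebra.one_def]
  · intro f hf
    exact absurd (funext fun i => Subsingleton.elim _ _) hf

noncomputable instance lexFintype (p q : ℕ) : Fintype (Lex (Fin q × Fin p)) :=
  Fintype.ofEquiv _ (toLex : Fin q × Fin p ≃ Lex (Fin q × Fin p))

lemma sig_mul (p q : ℕ) : sig n p * sig n q = sig n (p * q) := by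
  have hcard : Fintype.card (Lex (Fin q × Fin p)) = p * q := by
    rw [Fintype.card_congr (ofLex : Lex (Fin q × Fin p) ≃ Fin q × Fin p)]
    simp [Nat.mul_comm]
  rw [← sigA_eq_sig n (Lex (Fin q × Fin p)) hcard]
  unfold sig sigA
  rw [Finset.sum_mul_sum]
  simp only [MonoidAlgebra.single_mul_single, one_mul]
  rw [← Finset.sum_product']
  refine Fintype.sum_equiv
    ⟨fun x : (Fin n → Fin p) × (Fin n → Fin q) =>
        (fun i => toLex (x.2 ((Tuple.sort x.1)⁻¹ i), x.1 i)),
      fun h => (fun i => (ofLex (h i)).2,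
        fun i => (ofLex (h (Tuple.sort (fun j => (ofLex (h j)).2) i))).1),
      ?_, ?_⟩ _ _ ?_
  · intro x
    ext i
    · simp
    · simp
  · intro h
    funext i
    simp only []
    rw [Perm.coe_inv, Equiv.apply_symm_apply]
    exact toLex.apply_symm_apply (h i)
  · intro x
    simp only [Equiv.coe_fn_mk]
    rw [sort_pair x.1 x.2]

section Sig2
variable {n : ℕ}

lemma card_filter_perm {γ : Type*} [Fintype γ] [DecidableEq γ] (σ : Perm γ) (p : γ → Prop)
    [DecidablePred p] :
    (univ.filter (fun a => p (σ a))).card = (univ.filter p).card := by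
  refine Finset.card_nbij' (fun a => σ a) (fun b => σ⁻¹ b) ?_ ?_ ?_ ?_
  · intro a ha; simp at ha ⊢; exact ha
  · intro b hb; simp at hb ⊢; simpa [Perm.coe_inv, Equiv.apply_symm_apply] using hb
  · intro a _; simp
  · intro b _; simp

lemma mono2_iff {c : Fin n → Fin 2} (hc : Monotone c) {i : ℕ}
    (hcard : (univ.filter (fun a => c a = 0)).card = i) :
    ∀ a : Fin n, c a = 0 ↔ (a : ℕ) < i := by
  have hdown : ∀ a b : Fin n, a ≤ b → c b = 0 → c a = 0 := by
    intro a b hab hb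
    have := hc hab
    rw [hb] at this
    exact le_antisymm this (Fin.zero_le _)
  intro a
  constructor
  · intro ha
    by_contra hlt
    push_neg at hlt
    have hsub : Finset.Iic a ⊆ univ.filter (fun b => c b = 0) := by
      intro b hb
      simp only [Finset.mem_Iic] at hb
      simp only [Finset.mem_filter, Finset.mem_univ, true_and]
      exact hdown b a hb ha
    have := Finset.card_le_card hsub
    rw [hcard, Fin.card_Iic] at this
    omega
  · intro ha
    by_contra hne
    have hsub : univ.filter (fun b => c b = 0) ⊆ Finset.Iio a := by
      intro b hb
      simp only [Finset.mem_filter, Finset.mem_univ, true_and] at hb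
      simp only [Finset.mem_Iio]
      by_contra hba
      push_neg at hba
      exact hne (hdown a b hba hb)
    have := Finset.card_le_card hsub
    rw [hcard, Fin.card_Iio] at this
    omega

lemma fin2_cases (x : Fin 2) : x = 0 ∨ x = 1 := by omega

lemma card_filter_val_lt {i : ℕ} (hi : i ≤ n) :
    (univ.filter (fun a : Fin n => (a : ℕ) < i)).card = i := by
  have h1 : univ.filter (fun a : Fin n => (a : ℕ) < i)
      = (Finset.range i).attachFin
          (fun m hm => lt_of_lt_of_le (Finset.mem_range.mp hm) hi) := by
    ext a; simp [Finset.mem_attachFin]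
  rw [h1, Finset.card_attachFin, Finset.card_range]

lemma shuffle_filter_eq {i : ℕ} (hi : i ≤ n) :
    ∑ f ∈ univ.filter
        (fun f : Fin n → Fin 2 => (univ.filter (fun a => f a = 0)).card = i),
      MonoidAlgebra.single (Tuple.sort f) (1 : ℚ) = shuffleSum n i := by
  classical
  set c : Fin n → Fin 2 := fun a => if (a : ℕ) < i then 0 else 1 with hc
  have hcmono : Monotone c := by
    intro a b hab
    have hab' : (a : ℕ) ≤ (b : ℕ) := hab
    dsimp [c]
    split_ifs with h1 h2 h2
    · exact le_rfl
    · exact Fin.zero_le _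
    · exact absurd h2 (by omega)
    · exact le_rfl
  have hccard : (univ.filter (fun a => c a = 0)).card = i := by
    have : (univ.filter (fun a => c a = 0)) = univ.filter (fun a : Fin n => (a : ℕ) < i) := by
      ext a; simp only [Finset.mem_filter, Finset.mem_univ, true_and, c]
      split_ifs with h <;> simp [h]
    rw [this, card_filter_val_lt hi]
  rw [shuffleSum]
  refine Finset.sum_nbij' (fun f => Tuple.sort f) (fun w => fun x => c (w⁻¹ x))
    ?_ ?_ ?_ ?_ ?_
  · -- maps to shuffle set
    intro f hf
    simp only [Finset.mem_filter, Finset.mem_univ, true_and] at hf ⊢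
    obtain ⟨hmono, hstab⟩ := sort_facts f
    have hcard' : (univ.filter (fun a => (f ∘ ⇑(Tuple.sort f)) a = 0)).card = i := by
      simp only [Function.comp_apply]
      rw [card_filter_perm (Tuple.sort f) (fun x => f x = 0)]
      exact hf
    have hiff : ∀ a : Fin n, f (Tuple.sort f a) = 0 ↔ (a : ℕ) < i := by
      intro a; simpa using mono2_iff hmono hcard' a
    intro a b hab hcase
    have hab' : (a : ℕ) < (b : ℕ) := hab
    refine hstab a b hab ?_
    rcases hcase with hb | ha
    · rw [(hiff a).mpr (by omega), (hiff b).mpr hb]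
    · have h1 : ¬ f (Tuple.sort f a) = 0 := fun h => by have := (hiff a).mp h; omega
      have h2 : ¬ f (Tuple.sort f b) = 0 := fun h => by have := (hiff b).mp h; omega
      rcases fin2_cases (f (Tuple.sort f a)) with h | h
      · exact absurd h h1
      rcases fin2_cases (f (Tuple.sort f b)) with h' | h'
      · exact absurd h' h2
      rw [h, h']
  · -- inverse maps to function set
    intro w hw
    simp only [Finset.mem_filter, Finset.mem_univ, true_and]
    rw [card_filter_perm w⁻¹ (fun x => c x = 0)]
    exact hccard
  · -- left inverse
    intro f hf
    simp only [Finset.mem_filter, Finset.mem_univ, true_and] at hf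
    obtain ⟨hmono, _⟩ := sort_facts f
    have hcard' : (univ.filter (fun a => (f ∘ ⇑(Tuple.sort f)) a = 0)).card = i := by
      simp only [Function.comp_apply]
      rw [card_filter_perm (Tuple.sort f) (fun x => f x = 0)]
      exact hf
    have hiff : ∀ a : Fin n, f (Tuple.sort f a) = 0 ↔ (a : ℕ) < i := by
      intro a; simpa using mono2_iff hmono hcard' a
    funext x
    show c ((Tuple.sort f)⁻¹ x) = f x
    have h1 : c ((Tuple.sort f)⁻¹ x) = 0 ↔ ((((Tuple.sort f)⁻¹ x) : Fin n) : ℕ) < i := by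
      dsimp [c]; split_ifs with h <;> simp [h]
    have h2 : f x = 0 ↔ ((((Tuple.sort f)⁻¹ x) : Fin n) : ℕ) < i := by
      have := hiff ((Tuple.sort f)⁻¹ x)
      rwa [Perm.coe_inv, Equiv.apply_symm_apply] at this
    rcases fin2_cases (c ((Tuple.sort f)⁻¹ x)) with h | h <;>
      rcases fin2_cases (f x) with h' | h'
    · rw [h, h']
    · exfalso
      have ha := h1.mp h
      have hb := h2.mpr ha
      rw [h'] at hb
      exact absurd hb (by omega)
    · exfalso
      have ha := h2.mp h'
      have hb := h1.mpr ha
      rw [h] at hb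
      exact absurd hb (by omega)
    · rw [h, h']
  · -- right inverse
    intro w hw
    simp only [Finset.mem_filter, Finset.mem_univ, true_and] at hw
    refine (Tuple.eq_sort_iff.mpr ⟨?_, ?_⟩).symm
    · intro a b hab
      simp only [Function.comp_apply, Perm.coe_inv, Equiv.symm_apply_apply]
      exact hcmono hab
    · intro a b hab heq
      simp only [Perm.coe_inv, Equiv.symm_apply_apply] at heq
      dsimp [c] at heq
      split_ifs at heq with h1 h2 h2
      · exact hw a b hab (Or.inl h2)
      · exact absurd heq (by omega)
      · exact absurd heq (by omega)
      · exact hw a b hab (Or.inr (le_of_not_gt h1))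
  · intro f _
    rfl

lemma perm_strictMono_eq_one {w : Perm (Fin n)} (hw : StrictMono w) : w = 1 := by
  have h1 : (w : Fin n → Fin n) = Finset.orderEmbOfFin univ (by simp) :=
    Finset.orderEmbOfFin_unique (by simp) (fun x => Finset.mem_univ _) hw
  have h2 : (id : Fin n → Fin n) = Finset.orderEmbOfFin univ (by simp) :=
    Finset.orderEmbOfFin_unique (by simp) (fun x => Finset.mem_univ _) strictMono_id
  ext x
  have h3 : w x = x := by
    have := congrFun (h1.trans h2.symm) x
    simpa using this
  simp [h3]

lemma shuffleSum_zero : shuffleSum n 0 = 1 := by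
  rw [shuffleSum]
  have : Finset.univ.filter (fun w : Perm (Fin n) =>
      ∀ a b : Fin n, a < b → (((b : ℕ) < 0) ∨ 0 ≤ (a : ℕ)) → w a < w b) = {1} := by
    ext w
    simp only [Finset.mem_filter, Finset.mem_univ, true_and, Finset.mem_singleton]
    constructor
    · intro h
      exact perm_strictMono_eq_one (fun a b hab => h a b hab (Or.inr (Nat.zero_le _)))
    · rintro rfl
      intro a b hab _
      simpa using hab
  rw [this, Finset.sum_singleton, MonoidAlgebra.one_def]

lemma shuffleSum_last : shuffleSum n n = 1 := by
  rw [shuffleSum]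
  have : Finset.univ.filter (fun w : Perm (Fin n) =>
      ∀ a b : Fin n, a < b → (((b : ℕ) < n) ∨ n ≤ (a : ℕ)) → w a < w b) = {1} := by
    ext w
    simp only [Finset.mem_filter, Finset.mem_univ, true_and, Finset.mem_singleton]
    constructor
    · intro h
      exact perm_strictMono_eq_one (fun a b hab => h a b hab (Or.inl b.isLt))
    · rintro rfl
      intro a b hab _
      simpa using hab
  rw [this, Finset.sum_singleton, MonoidAlgebra.one_def]

lemma sig_two_decomp : sig n 2 = ∑ i ∈ Finset.range (n + 1), shuffleSum n i := by
  classical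
  have hmap : ∀ f : Fin n → Fin 2, f ∈ (univ : Finset (Fin n → Fin 2)) →
      (univ.filter (fun a => f a = 0)).card ∈ Finset.range (n + 1) := by
    intro f _
    have h := Finset.card_filter_le (univ : Finset (Fin n)) (fun a => f a = 0)
    rw [Finset.card_univ, Fintype.card_fin] at h
    exact Finset.mem_range.mpr (by omega)
  have key := Finset.sum_fiberwise_of_maps_to hmap
    (fun f => MonoidAlgebra.single (Tuple.sort f) (1 : ℚ))
  unfold sig sigA
  rw [← key]
  exact Finset.sum_congr rfl fun i hi =>
    shuffle_filter_eq (Nat.le_of_lt_succ (Finset.mem_range.mp hi))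

lemma sTotal_eq (hn : 1 ≤ n) : sTotal n = sig n 2 - 2 := by
  have hsplit : Finset.range (n + 1) = insert 0 (insert n (Finset.Icc 1 (n - 1))) := by
    ext a
    simp only [Finset.mem_range, Finset.mem_insert, Finset.mem_Icc]
    omega
  have h0 : (0 : ℕ) ∉ insert n (Finset.Icc 1 (n - 1)) := by
    simp only [Finset.mem_insert, Finset.mem_Icc]; omega
  have hn' : n ∉ Finset.Icc 1 (n - 1) := by
    simp only [Finset.mem_Icc]; omega
  have h2 : sig n 2 = shuffleSum n 0 + (shuffleSum n n + ∑ i ∈ Finset.Icc 1 (n-1), shuffleSum n i) := by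
    rw [sig_two_decomp, hsplit, Finset.sum_insert h0, Finset.sum_insert hn']
  rw [shuffleSum_zero, shuffleSum_last] at h2
  unfold sTotal
  rw [h2]
  generalize (∑ i ∈ Finset.Icc 1 (n - 1), shuffleSum n i) = S
  rw [show (2 : MonoidAlgebra ℚ (Perm (Fin n))) = 1 + 1 from (one_add_one_eq_two).symm]
  abel

end Sig2

section Count
variable {n : ℕ}

open scoped Classical

noncomputable def descSet (w : Perm (Fin n)) : Finset ℕ :=
  (Finset.range (n - 1)).filter
    (fun a => ∃ h : a + 1 < n, w ⟨a + 1, h⟩ < w ⟨a, Nat.lt_of_succ_lt h⟩)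

lemma mem_descSet {w : Perm (Fin n)} {a : ℕ} (h : a + 1 < n) :
    a ∈ descSet w ↔ w ⟨a + 1, h⟩ < w ⟨a, Nat.lt_of_succ_lt h⟩ := by
  simp only [descSet, Finset.mem_filter, Finset.mem_range]
  constructor
  · rintro ⟨-, h', hlt⟩; exact hlt
  · intro hlt; exact ⟨by omega, h, hlt⟩

lemma descSet_subset (w : Perm (Fin n)) : descSet w ⊆ Finset.range (n - 1) :=
  Finset.filter_subset _ _

lemma descSet_card_le (w : Perm (Fin n)) : (descSet w).card ≤ n - 1 := by
  have := Finset.card_le_card (descSet_subset w)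
  simpa using this

noncomputable def oset (D : Finset ℕ) (i : ℕ) : ℕ :=
  ((Finset.range i).filter (fun t => t ∉ D)).card

lemma oset_le (D : Finset ℕ) (i : ℕ) : oset D i ≤ i := by
  have := Finset.card_le_card (Finset.filter_subset (fun t => t ∉ D) (Finset.range i))
  simpa [oset] using this

lemma oset_succ (D : Finset ℕ) (i : ℕ) :
    oset D (i + 1) = oset D i + (if i ∈ D then 0 else 1) := by
  unfold oset
  rw [Finset.range_add_one, Finset.filter_insert]
  by_cases h : i ∈ D
  · simp [h]
  · rw [if_pos h, Finset.card_insert_of_notMem (by simp)]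
    simp [h]

lemma oset_mono (D : Finset ℕ) {i j : ℕ} (hij : i ≤ j) : oset D i ≤ oset D j := by
  unfold oset
  exact Finset.card_le_card (Finset.filter_subset_filter _
    (Finset.range_subset_range.mpr hij))

lemma oset_add_card (D : Finset ℕ) (i : ℕ) :
    oset D i + ((Finset.range i).filter (fun t => t ∈ D)).card = i := by
  unfold oset
  rw [add_comm]
  rw [Finset.card_filter_add_card_filter_not (fun t => t ∈ D)]
  exact Finset.card_range i

lemma oset_inter_le (D : Finset ℕ) (i : ℕ) :
    ((Finset.range i).filter (fun t => t ∈ D)).card ≤ D.card :=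
  Finset.card_le_card (fun t ht => (Finset.mem_filter.mp ht).2)

lemma oset_top {D : Finset ℕ} (hD : D ⊆ Finset.range (n - 1)) :
    oset D (n - 1) = (n - 1) - D.card := by
  have h1 := oset_add_card D (n - 1)
  have h2 : (Finset.range (n - 1)).filter (fun t => t ∈ D) = D := by
    ext t
    simp only [Finset.mem_filter, Finset.mem_range]
    exact ⟨fun h => h.2, fun h => ⟨Finset.mem_range.mp (hD h), h⟩⟩
  rw [h2] at h1
  omega

lemma strictMono_val_le {K : ℕ} {s : Fin n → Fin K} (hs : StrictMono s) (i : Fin n) :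
    (i : ℕ) ≤ (s i : ℕ) := by
  have main : ∀ k : ℕ, ∀ hk : k < n, k ≤ (s ⟨k, hk⟩ : ℕ) := by
    intro k
    induction k with
    | zero => intro hk; exact Nat.zero_le _
    | succ b ih =>
      intro hk
      have hb : b < n := by omega
      have h1 := ih hb
      have h2 : s ⟨b, hb⟩ < s ⟨b + 1, hk⟩ := hs (by simp [Fin.lt_def])
      have h3 : (s ⟨b, hb⟩ : ℕ) < (s ⟨b + 1, hk⟩ : ℕ) := h2
      omega
  have := main (i : ℕ) i.isLt
  simpa using this

lemma strictMono_val_upper {K : ℕ} {s : Fin n → Fin K} (hs : StrictMono s) (i : Fin n) :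
    (s i : ℕ) + ((n - 1) - (i : ℕ)) ≤ K - 1 := by
  have main : ∀ k : ℕ, ∀ hk : k < n, (s ⟨n - 1 - k, by omega⟩ : ℕ) + k ≤ K - 1 := by
    intro k
    induction k with
    | zero =>
      intro hk
      have := (s ⟨n - 1 - 0, by omega⟩).isLt
      omega
    | succ b ih =>
      intro hk
      have hb : b < n := by omega
      have h1 := ih hb
      have h2 : s ⟨n - 1 - (b + 1), by omega⟩ < s ⟨n - 1 - b, by omega⟩ :=
        hs (by simp [Fin.lt_def]; omega)
      have h3 : (s ⟨n - 1 - (b + 1), by omega⟩ : ℕ) < (s ⟨n - 1 - b, by omega⟩ : ℕ) := h2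
      omega
  have hi : (i : ℕ) < n := i.isLt
  have := main ((n - 1) - (i : ℕ)) (by omega)
  have heq : (⟨n - 1 - ((n - 1) - (i : ℕ)), by omega⟩ : Fin n) = i := Fin.ext (by simp; omega)
  rw [heq] at this
  omega

lemma card_strictMono_filter (K : ℕ) :
    ((univ : Finset (Fin n → Fin K)).filter (fun s => StrictMono s)).card
      = Nat.choose K n := by
  have key : ((univ : Finset (Fin n → Fin K)).filter (fun s => StrictMono s)).card
      = (Finset.powersetCard n (univ : Finset (Fin K))).card := by
    refine Finset.card_bij' (fun s _ => Finset.image s univ)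
      (fun t ht => Finset.orderEmbOfFin t (by
        have := (Finset.mem_powersetCard.mp ht).2
        exact this)) ?_ ?_ ?_ ?_
    · intro s hs
      simp only [Finset.mem_filter, Finset.mem_univ, true_and] at hs
      rw [Finset.mem_powersetCard]
      exact ⟨Finset.subset_univ _,
        by rw [Finset.card_image_of_injective _ hs.injective, Finset.card_univ,
          Fintype.card_fin]⟩
    · intro t ht
      simp only [Finset.mem_filter, Finset.mem_univ, true_and]
      exact (Finset.orderEmbOfFin t _).strictMono
    · intro s hs
      simp only [Finset.mem_filter, Finset.mem_univ, true_and] at hs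
      exact (Finset.orderEmbOfFin_unique _ (fun x => Finset.mem_image_of_mem s
        (Finset.mem_univ x)) hs).symm
    · intro t ht
      ext x
      simp only [Finset.mem_image, Finset.mem_univ, true_and]
      constructor
      · rintro ⟨i, rfl⟩
        exact Finset.orderEmbOfFin_mem t _ i
      · intro hx
        have : x ∈ Set.range (Finset.orderEmbOfFin t
            (Finset.mem_powersetCard.mp ht).2) := by
          rw [Finset.range_orderEmbOfFin]
          exact hx
        obtain ⟨i, hi⟩ := this
        exact ⟨i, hi⟩
  rw [key, Finset.card_powersetCard, Finset.card_univ, Fintype.card_fin]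

end Count

section Count2
variable {n : ℕ}
open scoped Classical

/-- Condition on `c : Fin n → Fin m`: monotone and strictly increasing at descents of `w`. -/
def condA (w : Perm (Fin n)) {m : ℕ} (c : Fin n → Fin m) : Prop :=
  Monotone c ∧ ∀ a : ℕ, a ∈ descSet w → ∀ h : a + 1 < n,
    c ⟨a, Nat.lt_of_succ_lt h⟩ < c ⟨a + 1, h⟩

lemma sort_eq_iff_condA (w : Perm (Fin n)) {m : ℕ} (f : Fin n → Fin m) :
    Tuple.sort f = w ↔ condA w (fun i => f (w i)) := by
  constructor
  · intro hsort
    obtain ⟨hmono, hstab⟩ := sort_facts f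
    rw [hsort] at hmono hstab
    constructor
    · exact fun i j hij => hmono hij
    · intro a ha h
      have hd := (mem_descSet h).mp ha
      by_contra hle
      push_neg at hle
      have hle' : f (w ⟨a, Nat.lt_of_succ_lt h⟩) ≤ f (w ⟨a + 1, h⟩) :=
        hmono (by simp [Fin.le_def])
      have heq : f (w ⟨a, Nat.lt_of_succ_lt h⟩) = f (w ⟨a + 1, h⟩) :=
        le_antisymm hle' hle
      have := hstab ⟨a, Nat.lt_of_succ_lt h⟩ ⟨a + 1, h⟩ (by simp [Fin.lt_def]) heq
      exact absurd this (asymm hd)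
  · rintro ⟨hmono, hstrict⟩
    refine (Tuple.eq_sort_iff.mpr ⟨?_, ?_⟩).symm
    · exact fun i j hij => hmono hij
    · intro i j hij heq
      -- c is constant on [i,j]; no descents of w inside; so w increasing there
      have hconst : ∀ k : Fin n, i ≤ k → k ≤ j → f (w k) = f (w i) := by
        intro k hik hkj
        have h1 : f (w i) ≤ f (w k) := hmono hik
        have h2 : f (w k) ≤ f (w j) := hmono hkj
        rw [← heq] at h2
        exact le_antisymm h2 h1
      refine chainLt (fun x => w x) hij ?_
      intro a ha hab h1
      have hnotD : a ∉ descSet w := by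
        intro haD
        have hlt2 : f (w ⟨a, Nat.lt_of_succ_lt h1⟩) < f (w ⟨a + 1, h1⟩) :=
          hstrict a haD h1
        have e1 : f (w ⟨a, Nat.lt_of_succ_lt h1⟩) = f (w i) :=
          hconst _ (by simpa [Fin.le_def] using ha) (by simp [Fin.le_def]; omega)
        have e2 : f (w ⟨a + 1, h1⟩) = f (w i) :=
          hconst _ (by simp [Fin.le_def]; omega) (by simpa [Fin.le_def] using hab)
        rw [e1, e2] at hlt2
        exact lt_irrefl _ hlt2
      have hne : w ⟨a, Nat.lt_of_succ_lt h1⟩ ≠ w ⟨a + 1, h1⟩ :=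
        fun h => by
          have := w.injective h
          simp [Fin.ext_iff] at this
      have hnlt : ¬ w ⟨a + 1, h1⟩ < w ⟨a, Nat.lt_of_succ_lt h1⟩ :=
        fun h => hnotD ((mem_descSet h1).mpr h)
      rcases lt_trichotomy (w ⟨a, Nat.lt_of_succ_lt h1⟩) (w ⟨a + 1, h1⟩) with h | h | h
      · exact h
      · exact absurd h hne
      · exact absurd h hnlt

lemma card_sort_eq_condA (w : Perm (Fin n)) (m : ℕ) :
    ((univ : Finset (Fin n → Fin m)).filter (fun f => Tuple.sort f = w)).card
      = ((univ : Finset (Fin n → Fin m)).filter (fun c => condA w c)).card := by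
  refine Finset.card_bij' (fun f _ => fun i => f (w i)) (fun c _ => fun x => c (w⁻¹ x))
    ?_ ?_ ?_ ?_
  · intro f hf
    simp only [Finset.mem_filter, Finset.mem_univ, true_and] at hf ⊢
    exact (sort_eq_iff_condA w f).mp hf
  · intro c hc
    simp only [Finset.mem_filter, Finset.mem_univ, true_and] at hc ⊢
    rw [sort_eq_iff_condA]
    have : (fun i => c (w⁻¹ (w i))) = c := by
      funext i; rw [Perm.coe_inv, Equiv.symm_apply_apply]
    rwa [this]
  · intro f _
    funext x
    simp [Perm.coe_inv, Equiv.apply_symm_apply]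
  · intro c _
    funext i
    simp [Perm.coe_inv, Equiv.symm_apply_apply]

lemma card_condA (w : Perm (Fin n)) {m : ℕ} (hm : 1 ≤ m) (hn : 1 ≤ n) :
    ((univ : Finset (Fin n → Fin m)).filter (fun c => condA w c)).card
      = Nat.choose (m + (n - 1) - (descSet w).card) n := by
  set D := descSet w with hD
  set d := D.card with hd
  have hdle : d ≤ n - 1 := descSet_card_le w
  set K := m + (n - 1) - d with hK
  have hK1 : 1 ≤ K := by omega
  have ho_le : ∀ i : ℕ, oset D i ≤ i := oset_le D
  have ho_top : oset D (n - 1) = (n - 1) - d := oset_top (descSet_subset w)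
  have ho_bound : ∀ i : Fin n, oset D (i : ℕ) ≤ (n - 1) - d := by
    intro i
    have h1 : (i : ℕ) ≤ n - 1 := by have := i.isLt; omega
    exact le_trans (oset_mono D h1) (le_of_eq ho_top)
  have ho_lower : ∀ i : Fin n, (i : ℕ) ≤ oset D (i : ℕ) + d := by
    intro i
    have h1 := oset_add_card D (i : ℕ)
    have h2 := oset_inter_le D (i : ℕ)
    omega
  rw [← card_strictMono_filter (n := n) K]
  refine Finset.card_bij'
    (fun c _ => fun i => (⟨(c i : ℕ) + oset D (i : ℕ), by
      have h1 := (c i).isLt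
      have h2 := ho_bound i
      omega⟩ : Fin K))
    (fun s hs => fun i => (⟨(s i : ℕ) - oset D (i : ℕ), by
      have hs' : StrictMono s := by
        have := (Finset.mem_filter.mp hs).2
        exact this
      have h1 := strictMono_val_upper hs' i
      have h2 := ho_lower i
      have h3 := i.isLt
      omega⟩ : Fin m))
    ?_ ?_ ?_ ?_
  · -- φ c is strict mono
    intro c hc
    simp only [Finset.mem_filter, Finset.mem_univ, true_and] at hc ⊢
    obtain ⟨hmono, hstrict⟩ := hc
    refine strictMono_of_adjacent _ ?_
    intro a h1
    simp only [Fin.mk_lt_mk, Fin.val_mk]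
    have hos := oset_succ D a
    by_cases haD : a ∈ D
    · have hv : (c ⟨a, Nat.lt_of_succ_lt h1⟩ : ℕ) < (c ⟨a + 1, h1⟩ : ℕ) :=
        hstrict a haD h1
      rw [if_pos haD] at hos
      omega
    · have hv : (c ⟨a, Nat.lt_of_succ_lt h1⟩ : ℕ) ≤ (c ⟨a + 1, h1⟩ : ℕ) :=
        hmono (by simp [Fin.le_def])
      rw [if_neg haD] at hos
      omega
  · -- ψ s satisfies condA
    intro s hs
    have hs' : StrictMono s := by
      have := (Finset.mem_filter.mp hs).2
      exact this
    simp only [Finset.mem_filter, Finset.mem_univ, true_and]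
    constructor
    · refine monotone_of_adjacent _ ?_
      intro a h1
      simp only [Fin.mk_le_mk, Fin.val_mk]
      have hsv : (s ⟨a, Nat.lt_of_succ_lt h1⟩ : ℕ) < (s ⟨a + 1, h1⟩ : ℕ) :=
        hs' (by simp [Fin.lt_def])
      have hos := oset_succ D a
      have h2 := ho_le a
      have h3 : a ≤ (s ⟨a, Nat.lt_of_succ_lt h1⟩ : ℕ) := by
        have := strictMono_val_le hs' ⟨a, Nat.lt_of_succ_lt h1⟩
        simpa using this
      by_cases haD : a ∈ D
      · rw [if_pos haD] at hos; omega
      · rw [if_neg haD] at hos; omega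
    · intro a haD h1
      simp only [Fin.mk_lt_mk, Fin.val_mk]
      have hsv : (s ⟨a, Nat.lt_of_succ_lt h1⟩ : ℕ) < (s ⟨a + 1, h1⟩ : ℕ) :=
        hs' (by simp [Fin.lt_def])
      have hos := oset_succ D a
      have h2 := ho_le a
      have h3 : a ≤ (s ⟨a, Nat.lt_of_succ_lt h1⟩ : ℕ) := by
        have := strictMono_val_le hs' ⟨a, Nat.lt_of_succ_lt h1⟩
        simpa using this
      rw [if_pos haD] at hos
      omega
  · -- left inverse
    intro c hc
    funext i
    apply Fin.ext
    simp only [Fin.val_mk]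
    omega
  · -- right inverse
    intro s hs
    have hs' : StrictMono s := by
      have := (Finset.mem_filter.mp hs).2
      exact this
    funext i
    apply Fin.ext
    simp only [Fin.val_mk]
    have h1 := strictMono_val_upper hs' i
    have h2 := ho_lower i
    have h3 := strictMono_val_le hs' i
    have h4 := i.isLt
    have h5 := ho_le (i : ℕ)
    omega

lemma count_sort_eq (w : Perm (Fin n)) {m : ℕ} (hm : 1 ≤ m) (hn : 1 ≤ n) :
    ((univ : Finset (Fin n → Fin m)).filter (fun f => Tuple.sort f = w)).card
      = Nat.choose (m + (n - 1) - (descSet w).card) n := by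
  rw [card_sort_eq_condA, card_condA w hm hn]

end Count2

section Poly
open Polynomial
variable {n : ℕ}

lemma cast_descFactorial_prod (M k : ℕ) :
    ∏ t ∈ Finset.range k, ((M : ℚ) - t) = (M.descFactorial k : ℚ) := by
  induction k with
  | zero => simp
  | succ k ih =>
    rw [Finset.prod_range_succ, ih, Nat.descFactorial_succ, Nat.cast_mul]
    rcases le_or_gt k M with h | h
    · rw [Nat.cast_sub h]
      ring
    · have h1 : M.descFactorial k = 0 := Nat.descFactorial_eq_zero_iff_lt.mpr h
      have h2 : M - k = 0 := by omega
      rw [h1, h2]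
      simp

noncomputable def nu (n d : ℕ) : Polynomial ℚ :=
  Polynomial.C ((n.factorial : ℚ)⁻¹) *
    ∏ t ∈ Finset.range n, (Polynomial.X + Polynomial.C ((n : ℚ) - 1 - d - t))

lemma nu_natDegree_le (d : ℕ) : (nu n d).natDegree ≤ n := by
  refine le_trans (natDegree_mul_le) ?_
  rw [natDegree_C]
  refine le_trans (by omega : _ ≤ 0 + (∏ t ∈ Finset.range n,
    (Polynomial.X + Polynomial.C ((n : ℚ) - 1 - d - t))).natDegree) ?_
  simp only [zero_add]
  refine le_trans (natDegree_prod_le _ _) ?_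
  calc ∑ t ∈ Finset.range n, (Polynomial.X + Polynomial.C ((n : ℚ) - 1 - d - t)).natDegree
      ≤ ∑ t ∈ Finset.range n, 1 := by
        refine Finset.sum_le_sum fun t _ => ?_
        rw [natDegree_X_add_C]
    _ = n := by simp

lemma nu_coeff_zero {d : ℕ} (hn : 1 ≤ n) (hd : d ≤ n - 1) : (nu n d).coeff 0 = 0 := by
  rw [coeff_zero_eq_eval_zero]
  rw [nu, eval_mul, eval_prod]
  have hmem : n - 1 - d ∈ Finset.range n := Finset.mem_range.mpr (by omega)
  rw [Finset.prod_eq_zero hmem]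
  · ring
  · have hcast : ((n - 1 - d : ℕ) : ℚ) = (n : ℚ) - 1 - d := by
      rw [Nat.cast_sub (by omega : d ≤ n - 1), Nat.cast_sub (by omega : 1 ≤ n), Nat.cast_one]
    simp only [eval_add, eval_X, eval_C]
    rw [hcast]
    ring

lemma nu_eval_nat {d m : ℕ} (hn : 1 ≤ n) (hd : d ≤ n - 1) (hm : 1 ≤ m) :
    (nu n d).eval (m : ℚ) = (Nat.choose (m + (n - 1) - d) n : ℚ) := by
  set M := m + (n - 1) - d with hM
  have hMcast : (M : ℚ) = (m : ℚ) + ((n : ℚ) - 1) - (d : ℚ) := by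
    rw [hM, Nat.cast_sub (by omega : d ≤ m + (n - 1)), Nat.cast_add,
      Nat.cast_sub (by omega : 1 ≤ n), Nat.cast_one]
  rw [nu, eval_mul, eval_C, eval_prod]
  have hprod : ∏ t ∈ Finset.range n, ((Polynomial.X +
      Polynomial.C ((n : ℚ) - 1 - d - t)).eval (m : ℚ))
      = ∏ t ∈ Finset.range n, ((M : ℚ) - t) := by
    refine Finset.prod_congr rfl fun t _ => ?_
    simp only [eval_add, eval_X, eval_C]
    rw [hMcast]
    ring
  rw [hprod, cast_descFactorial_prod, Nat.descFactorial_eq_factorial_mul_choose,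
    Nat.cast_mul]
  rw [← mul_assoc, inv_mul_cancel₀ (by
    exact_mod_cast Nat.factorial_ne_zero n : ((n.factorial : ℚ)) ≠ 0), one_mul]

lemma key_scalar {Q ν : Polynomial ℚ} (hQdeg : Q.natDegree ≤ n) (hνdeg : ν.natDegree ≤ n)
    (hν0 : ν.coeff 0 = 0) (hroot : ∀ t ∈ Finset.Icc 1 n, Q.eval ((2 : ℚ) ^ t) = 0) :
    ∑ k ∈ Finset.range (n + 1), Q.coeff k * ν.eval ((2 : ℚ) ^ k) = 0 := by
  have hνev : ∀ x : ℚ, ν.eval x = ∑ t ∈ Finset.range (n + 1), ν.coeff t * x ^ t :=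
    fun x => eval_eq_sum_range' (by omega) x
  have hQev : ∀ x : ℚ, Q.eval x = ∑ k ∈ Finset.range (n + 1), Q.coeff k * x ^ k :=
    fun x => eval_eq_sum_range' (by omega) x
  calc ∑ k ∈ Finset.range (n + 1), Q.coeff k * ν.eval ((2 : ℚ) ^ k)
      = ∑ k ∈ Finset.range (n + 1), ∑ t ∈ Finset.range (n + 1),
          ν.coeff t * (Q.coeff k * ((2 : ℚ) ^ t) ^ k) := by
        refine Finset.sum_congr rfl fun k _ => ?_
        rw [hνev, Finset.mul_sum]
        refine Finset.sum_congr rfl fun t _ => ?_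
        rw [← pow_right_comm]
        ring
    _ = ∑ t ∈ Finset.range (n + 1), ν.coeff t * Q.eval ((2 : ℚ) ^ t) := by
        rw [Finset.sum_comm]
        refine Finset.sum_congr rfl fun t _ => ?_
        rw [hQev, Finset.mul_sum]
    _ = 0 := by
        have hsplit : Finset.range (n + 1) = insert 0 (Finset.Icc 1 n) := by
          ext a
          simp only [Finset.mem_range, Finset.mem_insert, Finset.mem_Icc]
          omega
        rw [hsplit, Finset.sum_insert (by simp)]
        rw [hν0, zero_mul, zero_add]
        refine Finset.sum_eq_zero fun t ht => ?_
        rw [hroot t ht, mul_zero]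

end Poly

section Annihilate
open Polynomial
variable {n : ℕ}

open scoped Classical

lemma sig_pow (k : ℕ) : (sig n 2) ^ k = sig n (2 ^ k) := by
  induction k with
  | zero => rw [pow_zero, pow_zero, sig_one]
  | succ k ih =>
    rw [pow_succ, ih, sig_mul, ← pow_succ]

lemma sig_eq_sum (m : ℕ) :
    sig n m = ∑ w : Perm (Fin n),
      (((univ : Finset (Fin n → Fin m)).filter (fun f => Tuple.sort f = w)).card : ℚ) •
        MonoidAlgebra.single w (1 : ℚ) := by
  unfold sig sigA
  have key := Finset.sum_fiberwise_of_maps_to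
    (fun (f : Fin n → Fin m) (_ : f ∈ univ) => Finset.mem_univ (Tuple.sort f))
    (fun f => MonoidAlgebra.single (Tuple.sort f) (1 : ℚ))
  rw [← key]
  refine Finset.sum_congr rfl fun w _ => ?_
  have h1 : ∑ f ∈ (univ : Finset (Fin n → Fin m)).filter (fun f => Tuple.sort f = w),
      MonoidAlgebra.single (Tuple.sort f) (1 : ℚ)
      = ∑ f ∈ (univ : Finset (Fin n → Fin m)).filter (fun f => Tuple.sort f = w),
        MonoidAlgebra.single w (1 : ℚ) := by
    refine Finset.sum_congr rfl fun f hf => ?_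
    rw [(Finset.mem_filter.mp hf).2]
  rw [h1, Finset.sum_const]
  exact (Nat.cast_smul_eq_nsmul ℚ _ _).symm

noncomputable def Qpoly (n : ℕ) : Polynomial ℚ :=
  ∏ j ∈ Finset.Icc 1 n, (Polynomial.X - Polynomial.C ((2 : ℚ) ^ j))

lemma Qpoly_natDegree_le : (Qpoly n).natDegree ≤ n := by
  refine le_trans (natDegree_prod_le _ _) ?_
  calc ∑ j ∈ Finset.Icc 1 n, (Polynomial.X - Polynomial.C ((2 : ℚ) ^ j)).natDegree
      ≤ ∑ j ∈ Finset.Icc 1 n, 1 := by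
        refine Finset.sum_le_sum fun j _ => ?_
        rw [natDegree_X_sub_C]
    _ ≤ n := by simp [Nat.card_Icc]

lemma Qpoly_root {t : ℕ} (ht : t ∈ Finset.Icc 1 n) : (Qpoly n).eval ((2 : ℚ) ^ t) = 0 := by
  rw [Qpoly, eval_prod]
  refine Finset.prod_eq_zero ht ?_
  simp

lemma annihilate (hn : 1 ≤ n) : Polynomial.aeval (sig n 2) (Qpoly n) = 0 := by
  have hdeg : (Qpoly n).natDegree < n + 1 := lt_of_le_of_lt Qpoly_natDegree_le (Nat.lt_succ_self n)
  rw [Polynomial.aeval_eq_sum_range' hdeg]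
  calc ∑ k ∈ Finset.range (n + 1), (Qpoly n).coeff k • (sig n 2) ^ k
      = ∑ k ∈ Finset.range (n + 1), ∑ w : Perm (Fin n),
          ((Qpoly n).coeff k *
            (((univ : Finset (Fin n → Fin (2 ^ k))).filter
              (fun f => Tuple.sort f = w)).card : ℚ)) •
            MonoidAlgebra.single w (1 : ℚ) := by
        refine Finset.sum_congr rfl fun k _ => ?_
        rw [sig_pow, sig_eq_sum, Finset.smul_sum]
        refine Finset.sum_congr rfl fun w _ => ?_
        rw [smul_smul]
    _ = ∑ w : Perm (Fin n), (∑ k ∈ Finset.range (n + 1), (Qpoly n).coeff k *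
          (((univ : Finset (Fin n → Fin (2 ^ k))).filter
            (fun f => Tuple.sort f = w)).card : ℚ)) •
          MonoidAlgebra.single w (1 : ℚ) := by
        rw [Finset.sum_comm]
        refine Finset.sum_congr rfl fun w _ => ?_
        rw [Finset.sum_smul]
    _ = 0 := by
        refine Finset.sum_eq_zero fun w _ => ?_
        have hzero : ∑ k ∈ Finset.range (n + 1), (Qpoly n).coeff k *
            (((univ : Finset (Fin n → Fin (2 ^ k))).filter
              (fun f => Tuple.sort f = w)).card : ℚ) = 0 := by
          set d := (descSet w).card with hd
          have hdle : d ≤ n - 1 := descSet_card_le w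
          have hcount : ∀ k : ℕ,
              ((((univ : Finset (Fin n → Fin (2 ^ k))).filter
                (fun f => Tuple.sort f = w)).card : ℚ))
                = (nu n d).eval ((2 : ℚ) ^ k) := by
            intro k
            rw [count_sort_eq w (Nat.one_le_two_pow) hn]
            have h2 : ((2 : ℚ) ^ k) = ((2 ^ k : ℕ) : ℚ) := by push_cast; ring
            rw [h2, nu_eval_nat hn hdle (Nat.one_le_two_pow)]
          calc ∑ k ∈ Finset.range (n + 1), (Qpoly n).coeff k *
              (((univ : Finset (Fin n → Fin (2 ^ k))).filter
                (fun f => Tuple.sort f = w)).card : ℚ)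
              = ∑ k ∈ Finset.range (n + 1), (Qpoly n).coeff k *
                  (nu n d).eval ((2 : ℚ) ^ k) := by
                refine Finset.sum_congr rfl fun k _ => ?_
                rw [hcount]
            _ = 0 := key_scalar Qpoly_natDegree_le (nu_natDegree_le d)
                  (nu_coeff_zero hn hdle) (fun t ht => Qpoly_root ht)
        rw [hzero, zero_smul]

end Annihilate

section Final
open Polynomial
variable {n : ℕ}

/-- eigenvalues -/
noncomputable def mu (j : ℕ) : ℚ := 2 ^ j - 2

lemma mu_injective : Function.Injective mu := by
  have h2 : StrictMono (fun j : ℕ => (2 : ℚ) ^ j) := fun i j hij => by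
    exact pow_lt_pow_right₀ one_lt_two hij
  intro a b hab
  have : (2 : ℚ) ^ a = 2 ^ b := by
    simpa [mu, sub_eq_sub_iff_add_eq_add] using hab
  exact h2.injective this

lemma sTotal_aeval (hn : 1 ≤ n) :
    sTotal n = Polynomial.aeval (sig n 2) (Polynomial.X - Polynomial.C (2 : ℚ)) := by
  rw [sTotal_eq hn, map_sub, aeval_X, aeval_C, map_ofNat]

lemma nodal_comp : (Lagrange.nodal (Finset.Icc 1 n) mu).comp
    (Polynomial.X - Polynomial.C (2 : ℚ)) = Qpoly n := by
  rw [Lagrange.nodal, Qpoly, Polynomial.prod_comp]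
  refine Finset.prod_congr rfl fun i _ => ?_
  rw [Polynomial.sub_comp, Polynomial.X_comp, Polynomial.C_comp, mu]
  rw [map_sub]
  ring

lemma nodal_annihilate (hn : 1 ≤ n) :
    Polynomial.aeval (sTotal n) (Lagrange.nodal (Finset.Icc 1 n) mu) = 0 := by
  rw [sTotal_aeval hn, ← Polynomial.aeval_comp, nodal_comp]
  exact annihilate hn

lemma nodal_dvd_of_roots {p : Polynomial ℚ}
    (h : ∀ k ∈ Finset.Icc 1 n, p.eval (mu k) = 0) :
    Lagrange.nodal (Finset.Icc 1 n) mu ∣ p := by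
  rw [Lagrange.nodal]
  refine Finset.prod_dvd_of_coprime ?_ ?_
  · intro a ha b hb hab
    have : IsUnit (mu a - mu b) :=
      isUnit_iff_ne_zero.mpr (sub_ne_zero_of_ne (fun h => hab (mu_injective h)))
    exact isCoprime_X_sub_C_of_isUnit_sub this
  · intro k hk
    exact Polynomial.dvd_iff_isRoot.mpr (h k hk)

lemma aeval_dvd_zero (hn : 1 ≤ n) {p : Polynomial ℚ}
    (h : Lagrange.nodal (Finset.Icc 1 n) mu ∣ p) :
    Polynomial.aeval (sTotal n) p = 0 := by
  obtain ⟨q, hq⟩ := h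
  rw [hq, map_mul, nodal_annihilate hn, zero_mul]

lemma euler_eq (j : ℕ) :
    euler n j = Polynomial.aeval (sTotal n) (Lagrange.basis (Finset.Icc 1 n) mu j) := by
  rw [euler]
  have hbasis : Lagrange.basis (Finset.Icc 1 n) mu j
      = ((((Finset.Icc 1 n).erase j).sort (· ≤ ·)).map
          (fun i => Lagrange.basisDivisor (mu j) (mu i))).prod := by
    rw [Lagrange.basis, Finset.prod_eq_multiset_prod,
      ← Finset.sort_eq ((Finset.Icc 1 n).erase j) (· ≤ ·), Multiset.map_coe,
      Multiset.prod_coe]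
  rw [hbasis, map_list_prod, List.map_map]
  refine congrArg List.prod (List.map_congr_left ?_)
  intro i _
  show ((2 ^ j - 2 : ℚ) - (2 ^ i - 2))⁻¹ • (sTotal n - ((2 ^ i - 2 : ℚ)) • 1)
    = Polynomial.aeval (sTotal n) (Lagrange.basisDivisor (mu j) (mu i))
  rw [Lagrange.basisDivisor, map_mul, aeval_C, map_sub, aeval_X, aeval_C]
  rw [Algebra.smul_def, Algebra.smul_def, mul_one, mu, mu]

theorem euler_orthogonal_idempotents' (hn : 1 ≤ n) :
    (∀ j ∈ Finset.Icc 1 n, euler n j * euler n j = euler n j) ∧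
    (∀ i ∈ Finset.Icc 1 n, ∀ j ∈ Finset.Icc 1 n, i ≠ j → euler n i * euler n j = 0) ∧
    (∑ j ∈ Finset.Icc 1 n, euler n j = 1) := by
  have hinj : Set.InjOn mu ↑(Finset.Icc 1 n) := fun a _ b _ h => mu_injective h
  have hne : (Finset.Icc 1 n).Nonempty := ⟨1, by simp [hn]⟩
  refine ⟨?_, ?_, ?_⟩
  · intro j hj
    rw [euler_eq, ← map_mul]
    have hroots : ∀ k ∈ Finset.Icc 1 n,
        (Lagrange.basis (Finset.Icc 1 n) mu j * Lagrange.basis (Finset.Icc 1 n) mu j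
          - Lagrange.basis (Finset.Icc 1 n) mu j).eval (mu k) = 0 := by
      intro k hk
      rw [Polynomial.eval_sub, Polynomial.eval_mul]
      by_cases hkj : k = j
      · subst hkj
        rw [Lagrange.eval_basis_self hinj hk]
        ring
      · rw [Lagrange.eval_basis_of_ne (fun h => hkj h.symm) hk]
        ring
    obtain ⟨q, hq⟩ := nodal_dvd_of_roots hroots
    have : Lagrange.basis (Finset.Icc 1 n) mu j * Lagrange.basis (Finset.Icc 1 n) mu j
        = Lagrange.basis (Finset.Icc 1 n) mu j + Lagrange.nodal (Finset.Icc 1 n) mu * q := by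
      rw [← hq]; ring
    rw [this, map_add, map_mul, nodal_annihilate hn, zero_mul, add_zero]
  · intro i hi j hj hij
    rw [euler_eq, euler_eq, ← map_mul]
    refine aeval_dvd_zero hn (nodal_dvd_of_roots ?_)
    intro k hk
    rw [Polynomial.eval_mul]
    by_cases hki : k = i
    · subst hki
      rw [Lagrange.eval_basis_of_ne (fun h => hij h.symm) hk]
      ring
    · rw [Lagrange.eval_basis_of_ne (fun h => hki h.symm) hk]
      ring
  · have : ∑ j ∈ Finset.Icc 1 n, euler n j
        = Polynomial.aeval (sTotal n) (∑ j ∈ Finset.Icc 1 n,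
            Lagrange.basis (Finset.Icc 1 n) mu j) := by
      rw [map_sum]
      exact Finset.sum_congr rfl fun j _ => euler_eq j
    rw [this, Lagrange.sum_basis hinj hne, map_one]

end Final


/-- The Eulerian idempotents `e_n^j`, `j = 1, ..., n`, are pairwise orthogonal idempotents
summing to the identity of `ℚ[S_n]`. -/
theorem euler_orthogonal_idempotents (n : ℕ) (hn : 1 ≤ n) :
    (∀ j ∈ Finset.Icc 1 n, euler n j * euler n j = euler n j) ∧
    (∀ i ∈ Finset.Icc 1 n, ∀ j ∈ Finset.Icc 1 n, i ≠ j → euler n i * euler n j = 0) ∧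
    (∑ j ∈ Finset.Icc 1 n, euler n j = 1) := by
  exact euler_orthogonal_idempotents' hn
end Sig
end

section
/- The expected number of fixed points of a random permutation of S_n distributed according to P(w) = (1/(n k^{n-1})) C(n + k - cd(w) - 1, n - 1) equals 1, for every n ≥ 1 and integer k ≥ 1. -/
open Equiv Finset

variable {M : ℕ}

/-- `p` is a descent position of `u`. -/
def isDes (u : Perm (Fin M)) (p : ℕ) : Bool :=
  if h : p + 1 < M then decide (u ⟨p + 1, h⟩ < u ⟨p, Nat.lt_of_succ_lt h⟩) else false

/-- number of descents among positions `< i`. -/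
def desBelow (u : Perm (Fin M)) (i : ℕ) : ℕ :=
  ((Finset.range i).filter (fun p => isDes u p)).card

def linDes (u : Perm (Fin M)) : ℕ := desBelow u M

lemma desBelow_le (u : Perm (Fin M)) (i : ℕ) : desBelow u i ≤ i := by
  classical
  calc ((Finset.range i).filter (fun p => isDes u p)).card ≤ (Finset.range i).card :=
        Finset.card_filter_le _ _
    _ = i := Finset.card_range i

lemma desBelow_mono (u : Perm (Fin M)) {i j : ℕ} (h : i ≤ j) : desBelow u i ≤ desBelow u j :=
  Finset.card_le_card (Finset.filter_subset_filter _ (Finset.range_subset_range.2 h))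

lemma desBelow_le_add (u : Perm (Fin M)) {i j : ℕ} (h : i ≤ j) :
    desBelow u j ≤ desBelow u i + (j - i) := by
  have : Finset.range j = Finset.range i ∪ Finset.Ico i j := by
    rw [Finset.range_eq_Ico, Finset.range_eq_Ico, Finset.Ico_union_Ico_eq_Ico (Nat.zero_le _) h]
  unfold desBelow
  rw [this, Finset.filter_union]
  calc _ ≤ _ := Finset.card_union_le _ _
    _ ≤ desBelow u i + (j - i) := by
        refine Nat.add_le_add le_rfl ?_
        calc ((Finset.Ico i j).filter _).card ≤ (Finset.Ico i j).card := Finset.card_filter_le _ _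
          _ = j - i := Nat.card_Ico i j

lemma desBelow_succ (u : Perm (Fin M)) (p : ℕ) :
    desBelow u (p + 1) = desBelow u p + (if isDes u p then 1 else 0) := by
  unfold desBelow
  rw [Finset.range_add_one, Finset.filter_insert]
  split <;> simp [Finset.card_insert_of_notMem, Finset.mem_filter]

lemma desBelow_eq_linDes (u : Perm (Fin M)) {i : ℕ} (hi : M ≤ i + 1) :
    desBelow u i = linDes u := by
  unfold desBelow linDes
  congr 1
  ext p
  simp only [Finset.mem_filter, Finset.mem_range]
  constructor
  · rintro ⟨hp, hd⟩
    refine ⟨?_, hd⟩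
    unfold isDes at hd
    split at hd
    · omega
    · simp at hd
  · rintro ⟨hp, hd⟩
    refine ⟨?_, hd⟩
    unfold isDes at hd
    split at hd
    · omega
    · simp at hd

lemma linDes_le (u : Perm (Fin M)) (i : ℕ) : linDes u ≤ desBelow u i + (M - 1 - i) := by
  rcases le_or_gt M (i+1) with h | h
  · rw [← desBelow_eq_linDes u h]; omega
  · have h1 : linDes u = desBelow u (M - 1) := (desBelow_eq_linDes u (by omega)).symm
    have := desBelow_le_add u (show i ≤ M - 1 by omega)
    omega

variable {M k : ℕ}

section adj
variable {α : Type*} [Preorder α]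

lemma lt_of_adj {g : Fin M → α}
    (hadj : ∀ p (hp : p + 1 < M), g ⟨p, Nat.lt_of_succ_lt hp⟩ < g ⟨p + 1, hp⟩)
    {a b : ℕ} (ha : a < M) (hb : b < M) (hab : a < b) : g ⟨a, ha⟩ < g ⟨b, hb⟩ := by
  induction b with
  | zero => omega
  | succ c ih =>
    rcases Nat.lt_or_ge a c with h | h
    · exact lt_trans (ih (by omega) h) (hadj c hb)
    · have : a = c := by omega
      subst this
      exact hadj a hb

lemma strictMono_of_adj {g : Fin M → α}
    (hadj : ∀ p (hp : p + 1 < M), g ⟨p, Nat.lt_of_succ_lt hp⟩ < g ⟨p + 1, hp⟩) :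
    StrictMono g := by
  intro i j hij
  have := lt_of_adj hadj i.isLt j.isLt (show (i : ℕ) < (j : ℕ) from hij)
  simpa using this

lemma le_of_adj {g : Fin M → α}
    (hadj : ∀ p (hp : p + 1 < M), g ⟨p, Nat.lt_of_succ_lt hp⟩ ≤ g ⟨p + 1, hp⟩)
    {a b : ℕ} (ha : a < M) (hb : b < M) (hab : a ≤ b) : g ⟨a, ha⟩ ≤ g ⟨b, hb⟩ := by
  induction b with
  | zero => have : a = 0 := by omega
            subst this; exact le_rfl
  | succ c ih =>
    rcases Nat.lt_or_ge a (c+1) with h | h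
    · exact le_trans (ih (by omega) (by omega)) (hadj c hb)
    · have : a = c + 1 := by omega
      subst this; exact le_rfl

lemma sm_gap {N : ℕ} {g : Fin M → Fin N} (hg : StrictMono g) (i j : Fin M) (hij : i ≤ j) :
    (g i : ℕ) + ((j : ℕ) - (i : ℕ)) ≤ (g j : ℕ) := by
  obtain ⟨t, ht⟩ : ∃ t, (j : ℕ) - (i : ℕ) = t := ⟨_, rfl⟩
  induction t generalizing j with
  | zero =>
    have hij' : (i : ℕ) = (j : ℕ) := by
      have := Fin.le_def.1 hij; omega
    have : i = j := Fin.ext hij'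
    subst this; omega
  | succ c ih =>
    have hj : 0 < (j : ℕ) := by have := Fin.le_def.1 hij; omega
    set j' : Fin M := ⟨(j : ℕ) - 1, by omega⟩ with hj'
    have h1 : i ≤ j' := by
      rw [Fin.le_def]; have := Fin.le_def.1 hij; simp [hj']; omega
    have h2 := ih j' h1 (by simp [hj']; omega)
    have h3 : g j' < g j := by apply hg; rw [Fin.lt_def]; simp [hj']; omega
    have h4 := Fin.lt_def.1 h3
    have hv : (j' : ℕ) = (j : ℕ) - 1 := rfl
    rw [hv] at h2
    omega
end adj

/-- `h` is a `u`-compatible tuple. -/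
def Compat (u : Perm (Fin M)) (h : Fin M → Fin k) : Prop :=
  ∀ p (hp : p + 1 < M),
    (isDes u p = true → h ⟨p, Nat.lt_of_succ_lt hp⟩ < h ⟨p + 1, hp⟩) ∧
    (isDes u p = false → h ⟨p, Nat.lt_of_succ_lt hp⟩ ≤ h ⟨p + 1, hp⟩)

lemma desBelow_le_linDes (u : Perm (Fin M)) (i : ℕ) (hi : i ≤ M) :
    desBelow u i ≤ linDes u := desBelow_mono u hi

lemma toG_bound (u : Perm (Fin M)) (h : Fin M → Fin k) (i : Fin M) :
    (h i : ℕ) + (i : ℕ) - desBelow u (i : ℕ) < M + k - 1 - linDes u := by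
  have h1 : (h i : ℕ) < k := (h i).isLt
  have h2 : desBelow u i ≤ (i : ℕ) := desBelow_le u i
  have h3 : (i : ℕ) < M := i.isLt
  have h4 := linDes_le u (i : ℕ)
  have h5 : desBelow u i ≤ linDes u := desBelow_le_linDes u i (le_of_lt h3)
  omega

lemma toH_ge (u : Perm (Fin M)) {g : Fin M → Fin (M + k - 1 - linDes u)}
    (hg : StrictMono g) (i : Fin M) : (i : ℕ) ≤ (g i : ℕ) := by
  have h1 := sm_gap hg ⟨0, i.pos⟩ i (by rw [Fin.le_def]; simp)
  simp only [Fin.val_mk] at h1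
  omega

lemma toH_top (u : Perm (Fin M)) {g : Fin M → Fin (M + k - 1 - linDes u)}
    (hg : StrictMono g) (i : Fin M) :
    (g i : ℕ) + (M - 1 - (i : ℕ)) < M + k - 1 - linDes u := by
  have h3 : (i : ℕ) < M := i.isLt
  have h1 := sm_gap hg i ⟨M - 1, by omega⟩ (by rw [Fin.le_def]; simp; omega)
  have h2 : ((g ⟨M - 1, by omega⟩ : Fin _) : ℕ) < M + k - 1 - linDes u := (g _).isLt
  simp only [Fin.val_mk] at h1
  omega

lemma toH_bound (u : Perm (Fin M)) {g : Fin M → Fin (M + k - 1 - linDes u)}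
    (hg : StrictMono g) (i : Fin M) :
    (g i : ℕ) + desBelow u (i : ℕ) - (i : ℕ) < k := by
  have h3 : (i : ℕ) < M := i.isLt
  have h0 := toH_ge u hg i
  have h1 := toH_top u hg i
  have h2 : desBelow u i ≤ (i : ℕ) := desBelow_le u i
  have h5 : desBelow u i ≤ linDes u := desBelow_le_linDes u i (le_of_lt h3)
  have h4 := linDes_le u (i : ℕ)
  omega

/-- The compat-tuples-to-strict-mono equivalence. -/
def compatEquiv (u : Perm (Fin M)) :
    {h : Fin M → Fin k // Compat u h} ≃
      {g : Fin M → Fin (M + k - 1 - linDes u) // StrictMono g} where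
  toFun h := ⟨fun i => ⟨(h.1 i : ℕ) + (i : ℕ) - desBelow u (i : ℕ), toG_bound u h.1 i⟩, by
    apply strictMono_of_adj
    intro p hp
    simp only [Fin.mk_lt_mk, Fin.val_mk]
    have hc := h.2 p hp
    have hs := desBelow_succ u p
    have h2 : desBelow u p ≤ p := desBelow_le u p
    rcases Bool.eq_false_or_eq_true (isDes u p) with hb | hb
    · have := Fin.lt_def.1 (hc.1 hb)
      rw [hb] at hs
      simp at hs
      omega
    · have := Fin.le_def.1 (hc.2 hb)
      rw [hb] at hs
      simp at hs
      omega⟩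
  invFun g := ⟨fun i => ⟨(g.1 i : ℕ) + desBelow u (i : ℕ) - (i : ℕ), toH_bound u g.2 i⟩, by
    intro p hp
    have hge1 := toH_ge u g.2 ⟨p, Nat.lt_of_succ_lt hp⟩
    have hge2 := toH_ge u g.2 ⟨p + 1, hp⟩
    have hmono : g.1 ⟨p, Nat.lt_of_succ_lt hp⟩ < g.1 ⟨p + 1, hp⟩ := by
      apply g.2; rw [Fin.lt_def]; simp
    have hmono' := Fin.lt_def.1 hmono
    have hs := desBelow_succ u p
    have h2 : desBelow u p ≤ p := desBelow_le u p
    simp only [Fin.val_mk] at hge1 hge2 hmono' ⊢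
    constructor <;> intro hb <;> rw [hb] at hs <;>
      simp at hs <;>
      simp only [Fin.lt_def, Fin.le_def, Fin.val_mk] <;> omega⟩
  left_inv h := by
    apply Subtype.ext; funext i; apply Fin.ext
    show ((h.1 i : ℕ) + (i : ℕ) - desBelow u (i : ℕ)) + desBelow u (i : ℕ) - (i : ℕ)
      = (h.1 i : ℕ)
    have h2 : desBelow u i ≤ (i : ℕ) := desBelow_le u i
    omega
  right_inv g := by
    apply Subtype.ext; funext i; apply Fin.ext
    show ((g.1 i : ℕ) + desBelow u (i : ℕ) - (i : ℕ)) + (i : ℕ) - desBelow u (i : ℕ)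
      = (g.1 i : ℕ)
    have hge1 := toH_ge u g.2 i
    have h2 : desBelow u i ≤ (i : ℕ) := desBelow_le u i
    omega

variable {M k : ℕ}

/-- Strictly monotone tuples correspond to subsets. -/
def smEquiv (N : ℕ) :
    {g : Fin M → Fin N // StrictMono g} ≃ {s : Finset (Fin N) // s.card = M} where
  toFun g := ⟨Finset.univ.image g.1, by
    rw [Finset.card_image_of_injective _ g.2.injective, Finset.card_univ, Fintype.card_fin]⟩
  invFun s := ⟨s.1.orderEmbOfFin s.2, (s.1.orderEmbOfFin s.2).strictMono⟩
  left_inv g := by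
    apply Subtype.ext
    exact (Finset.orderEmbOfFin_unique _ (fun x => Finset.mem_image_of_mem _ (Finset.mem_univ x))
      g.2).symm
  right_inv s := by
    apply Subtype.ext
    ext x
    simp only [Finset.mem_image, Finset.mem_univ, true_and]
    constructor
    · rintro ⟨i, rfl⟩
      exact Finset.orderEmbOfFin_mem s.1 s.2 i
    · intro hx
      have : x ∈ Set.range (s.1.orderEmbOfFin s.2) := by
        rw [Finset.range_orderEmbOfFin]
        exact hx
      obtain ⟨i, hi⟩ := this
      exact ⟨i, hi⟩

open scoped Classical in
lemma card_strictMono (N : ℕ) :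
    Fintype.card {g : Fin M → Fin N // StrictMono g} = N.choose M := by
  rw [Fintype.card_congr (smEquiv N)]
  have := Fintype.card_finset_len (α := Fin N) M
  rw [Fintype.card_fin] at this
  convert this using 2

open scoped Classical in
lemma card_compat (u : Perm (Fin M)) :
    Fintype.card {h : Fin M → Fin k // Compat u h} = (M + k - 1 - linDes u).choose M := by
  rw [Fintype.card_congr (compatEquiv u), _root_.card_strictMono]

variable {M k : ℕ}

lemma isDes_iff {u : Perm (Fin M)} {p : ℕ} (hp : p + 1 < M) :
    isDes u p = true ↔ u ⟨p + 1, hp⟩ < u ⟨p, Nat.lt_of_succ_lt hp⟩ := by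
  unfold isDes
  rw [dif_pos hp]
  simp

lemma compat_monotone {u : Perm (Fin M)} {h : Fin M → Fin k} (hc : Compat u h) :
    Monotone h := by
  intro i j hij
  have := le_of_adj (g := h) (fun p hp => by
    rcases Bool.eq_false_or_eq_true (isDes u p) with hb | hb
    · exact le_of_lt ((hc p hp).1 hb)
    · exact (hc p hp).2 hb) i.isLt j.isLt (Fin.le_def.1 hij)
  simpa using this

lemma compat_strict {u : Perm (Fin M)} {h : Fin M → Fin k} (hc : Compat u h) :
    ∀ i j : Fin M, i < j → h i = h j → u i < u j := by
  have hmono := compat_monotone hc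
  have key : ∀ b a (hb : b < M) (ha : a < M), a < b → h ⟨a, ha⟩ = h ⟨b, hb⟩ →
      u ⟨a, ha⟩ < u ⟨b, hb⟩ := by
    intro b
    induction b with
    | zero => omega
    | succ c ih =>
      intro a hb ha hab heq
      have hc' : c < M := by omega
      have h1 : h ⟨a, ha⟩ ≤ h ⟨c, hc'⟩ := hmono (by rw [Fin.le_def]; simp; omega)
      have h2 : h ⟨c, hc'⟩ ≤ h ⟨c + 1, hb⟩ := hmono (by rw [Fin.le_def]; simp)
      have heq2 : h ⟨c, hc'⟩ = h ⟨c + 1, hb⟩ := by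
        refine le_antisymm h2 ?_
        rw [← heq]
        exact h1
      have hadj : u ⟨c, hc'⟩ < u ⟨c + 1, hb⟩ := by
        rcases Bool.eq_false_or_eq_true (isDes u c) with hbb | hbb
        · exact absurd heq2 (ne_of_lt ((hc c hb).1 hbb))
        · have hne : u ⟨c, hc'⟩ ≠ u ⟨c + 1, hb⟩ := by
            intro hcon
            have := u.injective hcon
            simp at this
          rcases lt_or_gt_of_ne hne with h' | h'
          · exact h'
          · exact absurd ((isDes_iff hb).2 h') (by rw [hbb]; simp)
      rcases Nat.lt_or_ge a c with h' | h'
      · have h1' : h ⟨a, ha⟩ = h ⟨c, hc'⟩ := le_antisymm h1 (heq2 ▸ heq ▸ le_rfl)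
        exact lt_trans (ih a hc' ha h' h1') hadj
      · have : a = c := by omega
        subst this
        exact hadj
  intro i j hij heq
  have := key j i j.isLt i.isLt (Fin.lt_def.1 hij) (by simpa using heq)
  simpa using this

/-- Standardization: tuples biject with (permutation, compatible tuple) pairs. -/
def stdEquiv : (Fin M → Fin k) ≃ Σ u : Perm (Fin M), {h : Fin M → Fin k // Compat u h} where
  toFun f := ⟨Tuple.sort f, ⟨f ∘ Tuple.sort f, by
    intro p hp
    have hmono := Tuple.monotone_sort f
    have hle : (f ∘ Tuple.sort f) ⟨p, Nat.lt_of_succ_lt hp⟩ ≤ (f ∘ Tuple.sort f) ⟨p + 1, hp⟩ :=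
      hmono (by rw [Fin.le_def]; simp)
    refine ⟨?_, fun _ => hle⟩
    intro hb
    rcases lt_or_eq_of_le hle with h' | h'
    · exact h'
    · exfalso
      have hsp := (Tuple.eq_sort_iff.1 (rfl : Tuple.sort f = Tuple.sort f)).2
        ⟨p, Nat.lt_of_succ_lt hp⟩ ⟨p + 1, hp⟩ (by rw [Fin.lt_def]; simp) h'
      exact absurd hsp (asymm ((isDes_iff hp).1 hb))⟩⟩
  invFun s := s.2.1 ∘ ⇑(s.1)⁻¹
  left_inv f := by
    funext x
    simp
  right_inv := by
    rintro ⟨u, h, hc⟩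
    have key : Tuple.sort (h ∘ ⇑u⁻¹) = u := by
      refine (Tuple.eq_sort_iff.2 ⟨?_, ?_⟩).symm
      · have : (h ∘ ⇑u⁻¹) ∘ ⇑u = h := by funext x; simp
        rw [this]
        exact compat_monotone hc
      · intro i j hij heq
        simp only [Function.comp_apply, Equiv.Perm.coe_inv, Equiv.symm_apply_apply] at heq
        exact compat_strict hc i j hij heq
    refine Sigma.ext key ?_
    refine (Subtype.heq_iff_coe_eq ?_).2 ?_
    · intro x
      show Compat (Tuple.sort (h ∘ ⇑u⁻¹)) x ↔ Compat u x
      rw [key]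
    · show (h ∘ ⇑u⁻¹) ∘ ⇑(Tuple.sort (h ∘ ⇑u⁻¹)) = h
      rw [key]
      funext x
      simp

open scoped Classical in
theorem worpitzky (M k : ℕ) :
    ∑ u : Perm (Fin M), (M + k - 1 - linDes u).choose M = k ^ M := by
  have h1 : Fintype.card (Fin M → Fin k) = k ^ M := by
    rw [Fintype.card_fun, Fintype.card_fin, Fintype.card_fin]
  rw [← h1, Fintype.card_congr (stdEquiv (M := M) (k := k)), Fintype.card_sigma]
  exact Finset.sum_congr rfl fun u _ => (card_compat u).symm

open Equiv Finset

variable {m : ℕ}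

def rot (m : ℕ) : Perm (Fin (m + 2)) := finRotate (m + 2)

lemma rot_apply (i : Fin (m + 2)) : rot m i = i + 1 := finRotate_succ_apply i

lemma cycDes_eq (w : Perm (Fin (m + 2))) :
    cycDes w = (Finset.univ.filter fun i => w (i + 1) < w i).card := by
  unfold cycDes
  congr 1

open Fin.CommRing in
lemma fin_succ_ne_self (x : Fin (m + 2)) : x + 1 ≠ x := by
  intro hcon
  have h1 : (1 : Fin (m + 2)) = 0 := by
    calc (1 : Fin (m + 2)) = -x + (x + 1) := by ring
      _ = -x + x := by rw [hcon]
      _ = 0 := by ring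
  have := congrArg Fin.val h1
  simp at this

lemma cycDes_mul_rot (w : Perm (Fin (m + 2))) : cycDes (w * rot m) = cycDes w := by
  rw [cycDes_eq, cycDes_eq]
  apply Finset.card_nbij' (fun i => i + 1) (fun j => j - 1)
  · intro a ha
    simp only [Finset.mem_coe, Finset.mem_filter, Finset.mem_univ, true_and, Perm.mul_apply, rot_apply] at ha ⊢
    exact ha
  · intro a ha
    simp only [Finset.mem_coe, Finset.mem_filter, Finset.mem_univ, true_and, Perm.mul_apply, rot_apply] at ha ⊢
    simpa using ha
  · intro a _; simp
  · intro a _; simp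

lemma val_add_one' (x : Fin (m + 2)) :
    ((x + 1 : Fin (m + 2)) : ℕ) = if (x : ℕ) = m + 1 then 0 else (x : ℕ) + 1 := by
  rcases eq_or_ne x (Fin.last (m + 1)) with rfl | h
  · rw [Fin.last_add_one]
    simp
  · have h' : (x : ℕ) ≠ m + 1 := fun hc => h (Fin.ext (by simpa using hc))
    rw [Fin.val_add_one, if_neg h, if_neg h']

open Fin.CommRing in
lemma cycDes_rot_mul (w : Perm (Fin (m + 2))) : cycDes (rot m * w) = cycDes w := by
  rw [cycDes_eq, cycDes_eq]
  set p := w⁻¹ (Fin.last (m + 1)) with hp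
  set q := p - 1 with hq
  have hwp : w p = Fin.last (m + 1) := by rw [hp]; simp
  have hq1 : q + 1 = p := by rw [hq]; ring
  have hpq : p ≠ q := by
    intro hcon
    rw [← hcon] at hq1
    exact fin_succ_ne_self p hq1
  have hne_last : ∀ j : Fin (m + 2), j ≠ p → (w j : ℕ) ≠ m + 1 := by
    intro j hj hcon
    apply hj
    have : w j = Fin.last (m + 1) := Fin.ext (by simpa using hcon)
    rw [hp, ← this]
    simp
  have hp1 : (w (p + 1) : ℕ) ≠ m + 1 := by
    apply hne_last
    exact fin_succ_ne_self p
  have key : ∀ j : Fin (m + 2), j ≠ p → j ≠ q →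
      ((rot m * w) (j + 1) < (rot m * w) j ↔ w (j + 1) < w j) := by
    intro j hjp hjq
    have ha' : (w j : ℕ) ≠ m + 1 := hne_last j hjp
    have hb' : (w (j + 1) : ℕ) ≠ m + 1 := by
      apply hne_last
      intro hcon
      apply hjq
      rw [hq, ← hcon]
      ring
    simp only [Perm.mul_apply, rot_apply, Fin.lt_def, val_add_one']
    rw [if_neg ha', if_neg hb']
    omega
  apply Finset.card_nbij' (fun i => Equiv.swap p q i) (fun j => Equiv.swap p q j)
  · -- des(rot*w) → des(w)
    intro j hj
    simp only [Finset.mem_coe, Finset.mem_filter, Finset.mem_univ, true_and] at hj ⊢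
    rcases eq_or_ne j q with rfl | hjq
    · rw [Equiv.swap_apply_right]
      have h1 : w (p + 1) ≠ Fin.last (m + 1) := fun hc => hp1 (by rw [hc]; simp)
      rw [hwp]
      exact lt_of_le_of_ne (Fin.le_last _) h1
    · rcases eq_or_ne j p with rfl | hjp
      · exfalso
        have e2 : ((w p + 1 : Fin (m + 2)) : ℕ) = 0 := by
          rw [hwp, Fin.last_add_one]
          simp
        have e1 : ((w (p + 1) + 1 : Fin (m + 2)) : ℕ) = (w (p + 1) : ℕ) + 1 := by
          rw [val_add_one', if_neg hp1]
        simp only [Perm.mul_apply, rot_apply, Fin.lt_def, e1, e2] at hj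
        exact Nat.not_lt_zero _ hj
      · rw [Equiv.swap_apply_of_ne_of_ne hjp hjq]
        exact (key j hjp hjq).1 hj
  · -- des(w) → des(rot*w)
    intro i hi
    simp only [Finset.mem_coe, Finset.mem_filter, Finset.mem_univ, true_and] at hi ⊢
    rcases eq_or_ne i p with rfl | hip
    · rw [Equiv.swap_apply_left]
      simp only [Perm.mul_apply, rot_apply, Fin.lt_def]
      have e1 : ((w (q + 1) + 1 : Fin (m + 2)) : ℕ) = 0 := by
        rw [hq1, hwp, Fin.last_add_one]
        simp
      have hwq : (w q : ℕ) ≠ m + 1 := hne_last q (Ne.symm hpq)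
      have e2 : ((w q + 1 : Fin (m + 2)) : ℕ) = (w q : ℕ) + 1 := by
        rw [val_add_one', if_neg hwq]
      rw [e1, e2]
      omega
    · rcases eq_or_ne i q with rfl | hiq
      · exfalso
        rw [hq1, hwp] at hi
        exact absurd hi (not_lt.2 (Fin.le_last _))
      · rw [Equiv.swap_apply_of_ne_of_ne hip hiq]
        exact (key i hip hiq).2 hi
  · intro a _; simp
  · intro a _; simp

variable {m : ℕ}

lemma cycDes_mul_rot_pow (w : Perm (Fin (m + 2))) (t : ℕ) :
    cycDes (w * rot m ^ t) = cycDes w := by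
  induction t with
  | zero => simp
  | succ c ih =>
    rw [pow_succ, ← mul_assoc, cycDes_mul_rot, ih]

lemma cycDes_rot_pow_mul (w : Perm (Fin (m + 2))) (t : ℕ) :
    cycDes (rot m ^ t * w) = cycDes w := by
  induction t with
  | zero => simp
  | succ c ih =>
    rw [pow_succ', mul_assoc, cycDes_rot_mul, ih]

lemma cycDes_inv_rot_pow_mul (w : Perm (Fin (m + 2))) (t : ℕ) :
    cycDes ((rot m ^ t)⁻¹ * w) = cycDes w := by
  conv_rhs => rw [show w = rot m ^ t * ((rot m ^ t)⁻¹ * w) by group]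
  rw [cycDes_rot_pow_mul]

open Fin.CommRing in
lemma rot_pow_zero (t : ℕ) : (rot m ^ t) 0 = (t : Fin (m + 2)) := by
  induction t with
  | zero => simp
  | succ c ih =>
    rw [pow_succ', Perm.mul_apply, ih, rot_apply]
    push_cast
    ring

open Fin.CommRing in
lemma fix_sum (F : ℕ → ℕ) (x : Fin (m + 2)) :
    ∑ w ∈ Finset.univ.filter (fun w : Perm (Fin (m + 2)) => w x = x), F (cycDes w)
      = ∑ w ∈ Finset.univ.filter (fun w : Perm (Fin (m + 2)) => w 0 = 0), F (cycDes w) := by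
  have hx0 : (rot m ^ (x : ℕ)) 0 = x := by
    rw [rot_pow_zero, Fin.cast_val_eq_self]
  apply Finset.sum_nbij' (i := fun w => (rot m ^ (x : ℕ))⁻¹ * w * rot m ^ (x : ℕ))
    (j := fun w => rot m ^ (x : ℕ) * w * (rot m ^ (x : ℕ))⁻¹)
  · intro w hw
    simp only [Finset.mem_filter, Finset.mem_univ, true_and] at hw ⊢
    have h2 : w ((rot m ^ (x : ℕ)) 0) = (rot m ^ (x : ℕ)) 0 := by rw [hx0]; exact hw
    rw [Perm.mul_apply, Perm.mul_apply, h2, ← Perm.mul_apply, inv_mul_cancel, Perm.one_apply]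
  · intro w hw
    simp only [Finset.mem_filter, Finset.mem_univ, true_and] at hw ⊢
    have h1 : (rot m ^ (x : ℕ))⁻¹ x = 0 :=
      (rot m ^ (x : ℕ)).injective (by rw [← Perm.mul_apply, mul_inv_cancel, Perm.one_apply, hx0])
    rw [Perm.mul_apply, Perm.mul_apply, h1, hw, hx0]
  · intro w _; group
  · intro w _; group
  · intro w _
    rw [mul_assoc, cycDes_inv_rot_pow_mul, cycDes_mul_rot_pow]

lemma cycDes_ext (u : Perm (Fin (m + 1))) :
    cycDes (Equiv.Perm.decomposeFin.symm ((0 : Fin (m + 2)), u)) = linDes u + 1 := by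
  set W := Equiv.Perm.decomposeFin.symm ((0 : Fin (m + 2)), u) with hW
  have hW0 : W 0 = 0 := Equiv.Perm.decomposeFin_symm_apply_zero 0 u
  have hWs : ∀ j : Fin (m + 1), W j.succ = (u j).succ := by
    intro j
    rw [hW, Equiv.Perm.decomposeFin_symm_apply_succ, Equiv.swap_self]
    rfl
  rw [cycDes_eq, Finset.card_filter, Fin.sum_univ_succ, Fin.sum_univ_castSucc]
  have h0 : (if W (0 + 1) < W 0 then 1 else 0) = 0 := by
    rw [hW0, if_neg (Fin.not_lt_zero _)]
  have hlast : (if W ((Fin.last m).succ + 1) < W (Fin.last m).succ then 1 else 0) = 1 := by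
    rw [Fin.succ_last, Fin.last_add_one, hW0]
    rw [if_pos]
    have := hWs (Fin.last m)
    rw [Fin.succ_last] at this
    rw [this]
    exact Fin.succ_pos _
  have hmid : ∀ j : Fin m, (if W ((Fin.castSucc j).succ + 1) < W (Fin.castSucc j).succ
      then 1 else 0) = if isDes u (j : ℕ) then 1 else 0 := by
    intro j
    have he : (Fin.castSucc j).succ + 1 = (Fin.succ j).succ := by
      apply Fin.ext
      rw [val_add_one']
      have : ((Fin.castSucc j).succ : ℕ) = (j : ℕ) + 1 := by simp
      rw [this, if_neg (by omega)]
      simp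
    rw [he, hWs, hWs]
    have hj1 : (j : ℕ) + 1 < m + 1 := by omega
    have hcast : Fin.castSucc j = (⟨(j : ℕ), by omega⟩ : Fin (m + 1)) := by
      apply Fin.ext; simp
    have hsucc : Fin.succ j = (⟨(j : ℕ) + 1, hj1⟩ : Fin (m + 1)) := by
      apply Fin.ext; simp
    rw [hcast, hsucc]
    by_cases hd : u ⟨(j : ℕ) + 1, hj1⟩ < u ⟨(j : ℕ), by omega⟩
    · rw [if_pos ((isDes_iff hj1).2 hd), if_pos (Fin.succ_lt_succ_iff.2 hd)]
    · rw [if_neg (fun hcon => hd ((isDes_iff hj1).1 hcon)),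
        if_neg (fun hcon => hd (Fin.succ_lt_succ_iff.1 hcon))]
  rw [h0, hlast]
  have : ∑ j : Fin m, (if W ((Fin.castSucc j).succ + 1) < W (Fin.castSucc j).succ then 1 else 0)
      = ∑ j : Fin m, (if isDes u (j : ℕ) then 1 else 0) :=
    Finset.sum_congr rfl fun j _ => hmid j
  rw [this]
  have hlin : linDes u = ∑ j : Fin m, (if isDes u (j : ℕ) then 1 else 0) := by
    have h1 : linDes u = desBelow u m := (desBelow_eq_linDes u (by omega)).symm
    rw [h1]
    unfold desBelow
    rw [Finset.card_filter, Fin.sum_univ_eq_sum_range (fun p => if isDes u p then 1 else 0) m]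
  omega

open scoped Classical in
lemma fix0_sum (m k : ℕ) :
    ∑ w ∈ Finset.univ.filter (fun w : Perm (Fin (m + 2)) => w 0 = 0),
      ((m + 2) + k - cycDes w - 1).choose (m + 1) = k ^ (m + 1) := by
  rw [← worpitzky (m + 1) k]
  apply Finset.sum_nbij' (i := fun w => (Equiv.Perm.decomposeFin w).2)
    (j := fun u => Equiv.Perm.decomposeFin.symm ((0 : Fin (m + 2)), u))
  · intro w _; exact Finset.mem_univ _
  · intro u _
    simp only [Finset.mem_filter, Finset.mem_univ, true_and]
    exact Equiv.Perm.decomposeFin_symm_apply_zero 0 u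
  · intro w hw
    simp only [Finset.mem_filter, Finset.mem_univ, true_and] at hw
    have h1 : (Equiv.Perm.decomposeFin w).1 = w 0 := by
      simp [Equiv.Perm.decomposeFin]
    rw [← hw, ← h1]
    exact Equiv.Perm.decomposeFin.symm_apply_apply w
  · intro u _
    rw [Equiv.apply_symm_apply]
  · intro w hw
    simp only [Finset.mem_filter, Finset.mem_univ, true_and] at hw
    have h1 : (Equiv.Perm.decomposeFin w).1 = w 0 := by
      simp [Equiv.Perm.decomposeFin]
    have h2 : w = Equiv.Perm.decomposeFin.symm ((0 : Fin (m + 2)), (Equiv.Perm.decomposeFin w).2) := by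
      rw [← hw, ← h1]
      exact (Equiv.Perm.decomposeFin.symm_apply_apply w).symm
    set u := (Equiv.Perm.decomposeFin w).2
    have h3 : cycDes w = linDes u + 1 := by
      conv_lhs => rw [h2]
      exact cycDes_ext u
    rw [h3]
    congr 1
    have hd : linDes u ≤ m := by
      have h4 := linDes_le u m
      have h5 := desBelow_le u m
      omega
    omega

open scoped Classical in
lemma key2 (m k : ℕ) :
    ∑ w : Perm (Fin (m + 2)),
      ((m + 2) + k - cycDes w - 1).choose (m + 1)
        * (Finset.univ.filter (fun x : Fin (m + 2) => w x = x)).card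
      = (m + 2) * k ^ (m + 1) := by
  have step1 : ∀ w : Perm (Fin (m + 2)),
      ((m + 2) + k - cycDes w - 1).choose (m + 1)
          * (Finset.univ.filter (fun x : Fin (m + 2) => w x = x)).card
        = ∑ x : Fin (m + 2), if w x = x then ((m + 2) + k - cycDes w - 1).choose (m + 1) else 0 := by
    intro w
    rw [Finset.card_filter, Finset.mul_sum]
    apply Finset.sum_congr rfl
    intro x _
    split <;> simp
  calc ∑ w : Perm (Fin (m + 2)), ((m + 2) + k - cycDes w - 1).choose (m + 1)
        * (Finset.univ.filter (fun x : Fin (m + 2) => w x = x)).card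
      = ∑ w : Perm (Fin (m + 2)), ∑ x : Fin (m + 2),
          if w x = x then ((m + 2) + k - cycDes w - 1).choose (m + 1) else 0 :=
        Finset.sum_congr rfl fun w _ => step1 w
    _ = ∑ x : Fin (m + 2), ∑ w : Perm (Fin (m + 2)),
          if w x = x then ((m + 2) + k - cycDes w - 1).choose (m + 1) else 0 :=
        Finset.sum_comm
    _ = ∑ x : Fin (m + 2), ∑ w ∈ Finset.univ.filter (fun w : Perm (Fin (m + 2)) => w x = x),
          ((m + 2) + k - cycDes w - 1).choose (m + 1) := by
        apply Finset.sum_congr rfl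
        intro x _
        rw [Finset.sum_filter]
    _ = ∑ x : Fin (m + 2), ∑ w ∈ Finset.univ.filter (fun w : Perm (Fin (m + 2)) => w 0 = 0),
          ((m + 2) + k - cycDes w - 1).choose (m + 1) := by
        apply Finset.sum_congr rfl
        intro x _
        exact fix_sum (fun c => ((m + 2) + k - c - 1).choose (m + 1)) x
    _ = ∑ _x : Fin (m + 2), k ^ (m + 1) := by
        apply Finset.sum_congr rfl
        intro x _
        exact fix0_sum m k
    _ = (m + 2) * k ^ (m + 1) := by
        rw [Finset.sum_const, Finset.card_univ, Fintype.card_fin, smul_eq_mul]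

/-- The expected number of fixed points of a permutation of `S_n` distributed as a `k`-riffle
shuffle followed by a cut, `P(w) = (1/(n k^{n-1})) C(n+k-cd(w)-1, n-1)`, equals `1`. -/
theorem expected_fixed_points_eq_one (n k : ℕ) (hn : 1 ≤ n) (hk : 1 ≤ k) :
    ∑ w : Perm (Fin n),
      (1 / (n * (k : ℚ) ^ (n - 1))) * (Nat.choose (n + k - cycDes w - 1) (n - 1)) *
        ((Finset.univ.filter (fun x : Fin n => w x = x)).card : ℚ) = 1 := by
  have hk0 : ((k : ℕ) : ℚ) ≠ 0 := by
    simp only [ne_eq, Nat.cast_eq_zero]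
    omega
  match n, hn with
  | 1, _ =>
    rw [Finset.sum_eq_single_of_mem (1 : Perm (Fin 1)) (Finset.mem_univ _)
      (fun b _ hb => absurd (Subsingleton.elim b 1) hb)]
    have h1 : cycDes (1 : Perm (Fin 1)) = 0 := by
      unfold cycDes
      rw [Finset.card_eq_zero, Finset.filter_eq_empty_iff]
      intro i _
      simp only [Perm.one_apply, Fin.lt_def]
      omega
    have h2 : Finset.univ.filter (fun x : Fin 1 => (1 : Perm (Fin 1)) x = x) = Finset.univ := by
      rw [Finset.filter_eq_self]
      intro x _
      simp
    rw [h1, h2]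
    simp only [Nat.sub_zero, Nat.add_sub_cancel]
    rw [Nat.choose_zero_right]
    simp [hk0]
  | (m + 2), _ =>
    have hkey := key2 m k
    have he : m + 2 - 1 = m + 1 := rfl
    simp only [he]
    have step : ∀ w : Perm (Fin (m + 2)),
        (1 / ((m + 2 : ℕ) * (k : ℚ) ^ (m + 1))) * (Nat.choose ((m + 2) + k - cycDes w - 1) (m + 1))
          * ((Finset.univ.filter (fun x : Fin (m + 2) => w x = x)).card : ℚ)
        = (1 / ((m + 2 : ℕ) * (k : ℚ) ^ (m + 1))) *
            ((Nat.choose ((m + 2) + k - cycDes w - 1) (m + 1) : ℚ)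
              * ((Finset.univ.filter (fun x : Fin (m + 2) => w x = x)).card : ℚ)) := by
      intro w
      ring
    calc ∑ w : Perm (Fin (m + 2)),
        (1 / ((m + 2 : ℕ) * (k : ℚ) ^ (m + 1))) * (Nat.choose ((m + 2) + k - cycDes w - 1) (m + 1))
          * ((Finset.univ.filter (fun x : Fin (m + 2) => w x = x)).card : ℚ)
        = (1 / ((m + 2 : ℕ) * (k : ℚ) ^ (m + 1))) * ∑ w : Perm (Fin (m + 2)),
            ((Nat.choose ((m + 2) + k - cycDes w - 1) (m + 1) : ℚ)
              * ((Finset.univ.filter (fun x : Fin (m + 2) => w x = x)).card : ℚ)) := by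
          rw [Finset.mul_sum]
          exact Finset.sum_congr rfl fun w _ => step w
      _ = (1 / ((m + 2 : ℕ) * (k : ℚ) ^ (m + 1))) * (((m + 2) * k ^ (m + 1) : ℕ) : ℚ) := by
          rw [← hkey]
          push_cast
          ring
      _ = 1 := by
          push_cast
          rw [one_div, inv_mul_cancel₀]
          positivity
end
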